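/- arXiv:2308.07596 — 2 statements merged into one kernel-verified Lean document; each statement's English description precedes it below -/
import Mathlib

section
/- Let (M;ρ) be a module over a Lie conformal algebra A, φ ∈ C²(A,M) a 2-cocycle, and T : M → A a φ-twisted relative Rota–Baxter operator. Then M becomes an NS-Lie conformal algebra under the λ-multiplications u∘_λ v = ρ(T(u))_λ v and u∨_λ v = φ_λ(T(u),T(v)) for u,v ∈ M. -/
/- ------------------------------------------------------------------
Common definitions: λ-polynomials with coefficients in a ℂ[∂]-module,
Lie conformal algebras, modules, cochain complexes, the
Nijenhuis–Richardson bracket, bidegrees, lifts and twistings.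
------------------------------------------------------------------- -/

open scoped Classical

noncomputable section

namespace LCAF

/-- `MP k M` : `M`-valued polynomials in the `k` variables `λ₀, …, λ_{k-1}`,
encoded as finitely supported functions on multi-indices. -/
abbrev MP (k : ℕ) (M : Type*) [AddCommGroup M] : Type _ :=
  (Fin k →₀ ℕ) →₀ M

variable {A B M N A₁ A₂ : Type*}

section PolyOps

variable [AddCommGroup M] [Module ℂ M] [AddCommGroup N] [Module ℂ N]

/-- Apply a linear map to all coefficients of a polynomial. -/
def mapCoeff {k : ℕ} (g : M →ₗ[ℂ] N) (p : MP k M) : MP k N :=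
  p.mapRange g (map_zero g)

/-- Multiplication by the monomial `λ^α`. -/
def monMul {k : ℕ} (α : Fin k →₀ ℕ) (p : MP k M) : MP k M :=
  Finsupp.mapDomain (fun β => α + β) p

/-- The variable `λᵢ` as a scalar polynomial. -/
def Xv {k : ℕ} (i : Fin k) : MP k ℂ :=
  Finsupp.single (Finsupp.single i 1) (1 : ℂ)

/-- Multiplication of an `M`-valued polynomial by a scalar polynomial. -/
def scaleP {k : ℕ} (q : MP k ℂ) (p : MP k M) : MP k M :=
  q.sum fun α r => r • monMul α p

/-- The operator `q + c∂` acting on `M`-valued polynomials. -/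
def opnd {k : ℕ} (D : M →ₗ[ℂ] M) (q : MP k ℂ) (c : ℂ) : MP k M → MP k M :=
  fun p => scaleP q p + c • mapCoeff D p

/-- Substitution: in an `M`-valued polynomial in `k` variables, substitute the
`i`-th variable by the affine expression `q i + (c i)·∂` (with `∂ = D` acting on
coefficients), landing in polynomials in `k'` new variables. -/
def substFun {k k' : ℕ} (D : M →ₗ[ℂ] M) (q : Fin k → MP k' ℂ) (c : Fin k → ℂ)
    (p : MP k M) : MP k' M :=
  p.sum fun α m =>
    ((List.ofFn fun i : Fin k => (opnd D (q i) (c i))^[α i]).foldr (· ∘ ·) id)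
      (Finsupp.single 0 m)

/-- Renaming of variables. -/
def renameV {k k' : ℕ} (h : Fin k → Fin k') (p : MP k M) : MP k' M :=
  Finsupp.mapDomain (fun α => Finsupp.mapDomain h α) p

/-- The substitution `λ ↦ -λ-∂` in one variable. -/
def sub1 (D : M →ₗ[ℂ] M) (p : MP 1 M) : MP 1 M :=
  substFun D (fun _ => -(Xv 0)) (fun _ => -1) p

/-- The multi-index of the single variable `λ` in one variable. -/
def lam1 : Fin 1 →₀ ℕ := Finsupp.single 0 1

end PolyOps

section Binary

variable [AddCommGroup M] [Module ℂ M]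

/-- `F` with its variable substituted by the expression `q + c ∂`, in two
variables `λ = λ₀`, `μ = λ₁`. -/
def opE (D : M →ₗ[ℂ] M) (F : A → B → MP 1 M) (q : MP 2 ℂ) (c : ℂ) (a : A) (b : B) :
    MP 2 M :=
  substFun D (fun _ => q) (fun _ => c) (F a b)

/-- `F` applied with polynomial second argument (extended coefficientwise). -/
def opR [AddCommGroup B] [Module ℂ B] (D : M →ₗ[ℂ] M) (F : A → B → MP 1 M)
    (q : MP 2 ℂ) (c : ℂ) (a : A) (p : MP 2 B) : MP 2 M :=
  p.sum fun β x => monMul β (opE D F q c a x)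

/-- `F` applied with polynomial first argument (extended coefficientwise). -/
def opL [AddCommGroup A] [Module ℂ A] (D : M →ₗ[ℂ] M) (F : A → B → MP 1 M)
    (q : MP 2 ℂ) (c : ℂ) (p : MP 2 A) (b : B) : MP 2 M :=
  p.sum fun β x => monMul β (opE D F q c x b)

end Binary

section LCA

variable [AddCommGroup A] [Module ℂ A] [AddCommGroup M] [Module ℂ M]

/-- `(A, D, br)` is a Lie conformal algebra: `br a b` is `[a_λ b]`, an `A`-valued
polynomial in one variable `λ`. -/
structure IsLCA (D : A →ₗ[ℂ] A) (br : A → A → MP 1 A) : Prop where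
  add_left : ∀ a b c : A, br (a + b) c = br a c + br b c
  smul_left : ∀ (r : ℂ) (a b : A), br (r • a) b = r • br a b
  add_right : ∀ a b c : A, br a (b + c) = br a b + br a c
  smul_right : ∀ (r : ℂ) (a b : A), br a (r • b) = r • br a b
  sesq_left : ∀ a b : A, br (D a) b = -(monMul lam1 (br a b))
  sesq_right : ∀ a b : A, br a (D b) = monMul lam1 (br a b) + mapCoeff D (br a b)
  skew : ∀ a b : A, br a b = -(sub1 D (br b a))
  jacobi : ∀ a b c : A,
    opR D br (Xv 0) 0 a (renameV (fun _ => (1 : Fin 2)) (br b c)) =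
      opL D br (Xv 0 + Xv 1) 0 (renameV (fun _ => (0 : Fin 2)) (br a b)) c +
        opR D br (Xv 1) 0 b (renameV (fun _ => (0 : Fin 2)) (br a c))

/-- `(M, DM, rho)` is a module over the Lie conformal algebra `(A, D, br)`. -/
structure IsLCAMod (D : A →ₗ[ℂ] A) (br : A → A → MP 1 A)
    (DM : M →ₗ[ℂ] M) (rho : A → M → MP 1 M) : Prop where
  add_left : ∀ (a b : A) (m : M), rho (a + b) m = rho a m + rho b m
  smul_left : ∀ (r : ℂ) (a : A) (m : M), rho (r • a) m = r • rho a m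
  add_right : ∀ (a : A) (m n : M), rho a (m + n) = rho a m + rho a n
  smul_right : ∀ (r : ℂ) (a : A) (m : M), rho a (r • m) = r • rho a m
  d_left : ∀ (a : A) (m : M), rho (D a) m = -(monMul lam1 (rho a m))
  d_right : ∀ (a : A) (m : M),
    rho a (DM m) = monMul lam1 (rho a m) + mapCoeff DM (rho a m)
  comm : ∀ (a b : A) (m : M),
    opR DM rho (Xv 0) 0 a (renameV (fun _ => (1 : Fin 2)) (rho b m)) -
      opR DM rho (Xv 1) 0 b (renameV (fun _ => (0 : Fin 2)) (rho a m)) =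
    opL DM rho (Xv 0 + Xv 1) 0 (renameV (fun _ => (0 : Fin 2)) (br a b)) m

/-- `phi` is a 2-cocycle of `(A, D, br)` with coefficients in the module
`(M, DM, rho)`. -/
structure IsTwoCocycle (D : A →ₗ[ℂ] A) (br : A → A → MP 1 A)
    (DM : M →ₗ[ℂ] M) (rho : A → M → MP 1 M) (phi : A → A → MP 1 M) : Prop where
  add_left : ∀ (a b c : A), phi (a + b) c = phi a c + phi b c
  smul_left : ∀ (r : ℂ) (a b : A), phi (r • a) b = r • phi a b
  add_right : ∀ (a b c : A), phi a (b + c) = phi a b + phi a c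
  smul_right : ∀ (r : ℂ) (a b : A), phi a (r • b) = r • phi a b
  sesq_left : ∀ a b : A, phi (D a) b = -(monMul lam1 (phi a b))
  sesq_right : ∀ a b : A, phi a (D b) = monMul lam1 (phi a b) + mapCoeff DM (phi a b)
  skew : ∀ a b : A, phi a b = -(sub1 DM (phi b a))
  cocycle : ∀ a b c : A,
    opR DM rho (Xv 0) 0 a (renameV (fun _ => (1 : Fin 2)) (phi b c))
      - opR DM rho (Xv 1) 0 b (renameV (fun _ => (0 : Fin 2)) (phi a c))
      + opR DM rho (-(Xv 0) - Xv 1) (-1) c (renameV (fun _ => (0 : Fin 2)) (phi a b))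
      + opR DM phi (Xv 0) 0 a (renameV (fun _ => (1 : Fin 2)) (br b c))
      - opR DM phi (Xv 1) 0 b (renameV (fun _ => (0 : Fin 2)) (br a c))
      - opL DM phi (Xv 0 + Xv 1) 0 (renameV (fun _ => (0 : Fin 2)) (br a b)) c = 0

/-- `T : M → A` is a relative Rota–Baxter operator. -/
def IsRB (br : A → A → MP 1 A) (DM : M →ₗ[ℂ] M) (rho : A → M → MP 1 M)
    (T : M →ₗ[ℂ] A) : Prop :=
  ∀ m n : M, br (T m) (T n) = mapCoeff T (rho (T m) n - sub1 DM (rho (T n) m))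

/-- `T : M → A` is a `φ`-twisted relative Rota–Baxter operator. -/
def IsTwistedRB (br : A → A → MP 1 A) (DM : M →ₗ[ℂ] M) (rho : A → M → MP 1 M)
    (phi : A → A → MP 1 M) (T : M →ₗ[ℂ] A) : Prop :=
  ∀ m n : M, br (T m) (T n) =
    mapCoeff T (rho (T m) n - sub1 DM (rho (T n) m) + phi (T m) (T n))

/-- Combine an `A`-valued and an `M`-valued polynomial into an `A × M`-valued one. -/
def pairP {k : ℕ} (p : MP k A) (q : MP k M) : MP k (A × M) :=
  Finsupp.mapRange (fun a => (a, (0 : M))) rfl p +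
    Finsupp.mapRange (fun m => ((0 : A), m)) rfl q

/-- The (φ-twisted) semidirect product λ-bracket on `A × M`. -/
def sdBr (br : A → A → MP 1 A) (DM : M →ₗ[ℂ] M) (rho : A → M → MP 1 M)
    (phi : A → A → MP 1 M) : A × M → A × M → MP 1 (A × M) :=
  fun x y => pairP (br x.1 y.1) (rho x.1 y.2 - sub1 DM (rho y.1 x.2) + phi x.1 y.1)

end LCA

section NS

variable [AddCommGroup A] [Module ℂ A]

/-- The λ-bracket `[a_λ b] = a∘_λ b - b∘_{-λ-∂} a + a∨_λ b` attached to a pair of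
λ-multiplications. -/
def lieNS (D : A →ₗ[ℂ] A) (o v : A → A → MP 1 A) : A → A → MP 1 A :=
  fun a b => o a b - sub1 D (o b a) + v a b

/-- `(A, ∘_λ, ∨_λ)` is an NS-Lie conformal algebra. -/
structure IsNSLie (D : A →ₗ[ℂ] A) (o v : A → A → MP 1 A) : Prop where
  o_add_left : ∀ a b c : A, o (a + b) c = o a c + o b c
  o_smul_left : ∀ (r : ℂ) (a b : A), o (r • a) b = r • o a b
  o_add_right : ∀ a b c : A, o a (b + c) = o a b + o a c
  o_smul_right : ∀ (r : ℂ) (a b : A), o a (r • b) = r • o a b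
  o_sesq_left : ∀ a b : A, o (D a) b = -(monMul lam1 (o a b))
  o_sesq_right : ∀ a b : A, o a (D b) = monMul lam1 (o a b) + mapCoeff D (o a b)
  v_add_left : ∀ a b c : A, v (a + b) c = v a c + v b c
  v_smul_left : ∀ (r : ℂ) (a b : A), v (r • a) b = r • v a b
  v_add_right : ∀ a b c : A, v a (b + c) = v a b + v a c
  v_smul_right : ∀ (r : ℂ) (a b : A), v a (r • b) = r • v a b
  v_sesq_left : ∀ a b : A, v (D a) b = -(monMul lam1 (v a b))
  v_sesq_right : ∀ a b : A, v a (D b) = monMul lam1 (v a b) + mapCoeff D (v a b)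
  v_skew : ∀ a b : A, v a b = -(sub1 D (v b a))
  ns1 : ∀ a b c : A,
    opL D o (Xv 0 + Xv 1) 0 (renameV (fun _ => (0 : Fin 2)) (o a b)) c
      - opR D o (Xv 0) 0 a (renameV (fun _ => (1 : Fin 2)) (o b c))
      - opL D o (Xv 0 + Xv 1) 0 (renameV (fun _ => (1 : Fin 2)) (o b a)) c
      + opR D o (Xv 1) 0 b (renameV (fun _ => (0 : Fin 2)) (o a c))
      + opL D o (Xv 0 + Xv 1) 0 (renameV (fun _ => (0 : Fin 2)) (v a b)) c = 0
  ns2 : ∀ a b c : A,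
    opR D v (Xv 0) 0 a (renameV (fun _ => (1 : Fin 2)) (lieNS D o v b c))
      - opL D v (Xv 0 + Xv 1) 0 (renameV (fun _ => (0 : Fin 2)) (lieNS D o v a b)) c
      - opR D v (Xv 1) 0 b (renameV (fun _ => (0 : Fin 2)) (lieNS D o v a c))
      + opR D o (Xv 0) 0 a (renameV (fun _ => (1 : Fin 2)) (v b c))
      - opR D o (Xv 1) 0 b (renameV (fun _ => (0 : Fin 2)) (v a c))
      + opR D o (-(Xv 0) - Xv 1) (-1) c (renameV (fun _ => (0 : Fin 2)) (v a b)) = 0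

/-- `(A, ≻_λ, ≺_λ, ⋎_λ)` is a conformal NS-algebra. -/
structure IsConfNS (D : A →ₗ[ℂ] A) (su pr cu : A → A → MP 1 A) : Prop where
  su_add_left : ∀ a b c : A, su (a + b) c = su a c + su b c
  su_smul_left : ∀ (r : ℂ) (a b : A), su (r • a) b = r • su a b
  su_add_right : ∀ a b c : A, su a (b + c) = su a b + su a c
  su_smul_right : ∀ (r : ℂ) (a b : A), su a (r • b) = r • su a b
  su_sesq_left : ∀ a b : A, su (D a) b = -(monMul lam1 (su a b))
  su_sesq_right : ∀ a b : A, su a (D b) = monMul lam1 (su a b) + mapCoeff D (su a b)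
  pr_add_left : ∀ a b c : A, pr (a + b) c = pr a c + pr b c
  pr_smul_left : ∀ (r : ℂ) (a b : A), pr (r • a) b = r • pr a b
  pr_add_right : ∀ a b c : A, pr a (b + c) = pr a b + pr a c
  pr_smul_right : ∀ (r : ℂ) (a b : A), pr a (r • b) = r • pr a b
  pr_sesq_left : ∀ a b : A, pr (D a) b = -(monMul lam1 (pr a b))
  pr_sesq_right : ∀ a b : A, pr a (D b) = monMul lam1 (pr a b) + mapCoeff D (pr a b)
  cu_add_left : ∀ a b c : A, cu (a + b) c = cu a c + cu b c
  cu_smul_left : ∀ (r : ℂ) (a b : A), cu (r • a) b = r • cu a b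
  cu_add_right : ∀ a b c : A, cu a (b + c) = cu a b + cu a c
  cu_smul_right : ∀ (r : ℂ) (a b : A), cu a (r • b) = r • cu a b
  cu_sesq_left : ∀ a b : A, cu (D a) b = -(monMul lam1 (cu a b))
  cu_sesq_right : ∀ a b : A, cu a (D b) = monMul lam1 (cu a b) + mapCoeff D (cu a b)
  ax1 : ∀ x y z : A,
    opR D su (Xv 0) 0 x (renameV (fun _ => (1 : Fin 2)) (su y z)) =
      opL D su (Xv 0 + Xv 1) 0
        (renameV (fun _ => (0 : Fin 2)) (su x y + pr x y + cu x y)) z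
  ax2 : ∀ x y z : A,
    opR D pr (Xv 0) 0 x (renameV (fun _ => (1 : Fin 2)) (su y z + pr y z + cu y z)) =
      opL D pr (Xv 0 + Xv 1) 0 (renameV (fun _ => (0 : Fin 2)) (pr x y)) z
  ax3 : ∀ x y z : A,
    opR D su (Xv 0) 0 x (renameV (fun _ => (1 : Fin 2)) (pr y z)) =
      opL D pr (Xv 0 + Xv 1) 0 (renameV (fun _ => (0 : Fin 2)) (su x y)) z
  ax4 : ∀ x y z : A,
    opR D su (Xv 0) 0 x (renameV (fun _ => (1 : Fin 2)) (cu y z)) -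
        opL D cu (Xv 0 + Xv 1) 0
          (renameV (fun _ => (0 : Fin 2)) (su x y + pr x y + cu x y)) z =
      opL D pr (Xv 0 + Xv 1) 0 (renameV (fun _ => (0 : Fin 2)) (cu x y)) z -
        opR D cu (Xv 0) 0 x (renameV (fun _ => (1 : Fin 2)) (su y z + pr y z + cu y z))

/-- `N` is a Nijenhuis operator on the Lie conformal algebra `(A, D, br)`. -/
def IsNijenhuis (D : A →ₗ[ℂ] A) (br : A → A → MP 1 A) (N : A →ₗ[ℂ] A) : Prop :=
  (∀ a : A, N (D a) = D (N a)) ∧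
  ∀ a b : A, br (N a) (N b) =
    mapCoeff N (br (N a) b + br a (N b) - mapCoeff N (br a b))

/-- The deformed bracket `[a_λ b]_N`. -/
def deformBr (br : A → A → MP 1 A) (N : A →ₗ[ℂ] A) : A → A → MP 1 A :=
  fun a b => br (N a) b + br a (N b) - mapCoeff N (br a b)

end NS

/- ------------------------  cochains  ------------------------ -/

/-- `RawC n A M` : the underlying maps of cochains in `C^{n+1}(A, M)`:
`n+1` arguments from `A`, values in `M`-valued polynomials in `n` variables. -/
abbrev RawC (n : ℕ) (A : Type*) (M : Type*) [AddCommGroup M] : Type _ :=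
  (Fin (n + 1) → A) → MP n M

section CochainDefs

variable [AddCommGroup A] [Module ℂ A] [AddCommGroup M] [Module ℂ M]

/-- The scalar-polynomial part of the expression for `λ_t`, where the last
variable is replaced by `λ† = -λ₀ - ⋯ - λ_{N-1} - ∂`. -/
def exprQ {N : ℕ} (t : Fin (N + 1)) : MP N ℂ :=
  if h : t = Fin.last N then -(∑ i : Fin N, Xv i) else Xv (t.castPred h)

/-- The `∂`-coefficient of the expression for `λ_t`. -/
def exprC {N : ℕ} (t : Fin (N + 1)) : ℂ :=
  if t = Fin.last N then -1 else 0

/-- `f` is a cochain in `C^{n+1}(A, M)` (conformal sesquilinearity, multilinearity,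
and skew-symmetry with the substitution `λ_{last} ↦ λ†`). -/
structure IsCochain {n : ℕ} (DA : A →ₗ[ℂ] A) (DM : M →ₗ[ℂ] M) (f : RawC n A M) :
    Prop where
  map_add : ∀ (a : Fin (n + 1) → A) (i : Fin (n + 1)) (x y : A),
    f (Function.update a i (x + y)) =
      f (Function.update a i x) + f (Function.update a i y)
  map_smul : ∀ (a : Fin (n + 1) → A) (i : Fin (n + 1)) (r : ℂ) (x : A),
    f (Function.update a i (r • x)) = r • f (Function.update a i x)
  sesq : ∀ (a : Fin (n + 1) → A) (i : Fin n),
    f (Function.update a i.castSucc (DA (a i.castSucc))) =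
      -(monMul (Finsupp.single i 1) (f a))
  sesq_last : ∀ a : Fin (n + 1) → A,
    f (Function.update a (Fin.last n) (DA (a (Fin.last n)))) =
      (∑ i : Fin n, monMul (Finsupp.single i 1) (f a)) + mapCoeff DM (f a)
  skew : ∀ (σ : Equiv.Perm (Fin (n + 1))) (a : Fin (n + 1) → A),
    f a = ((Equiv.Perm.sign σ : ℤˣ) : ℤ) •
      substFun DM (fun j : Fin n => exprQ (σ j.castSucc))
        (fun j : Fin n => exprC (σ j.castSucc)) (f (a ∘ σ))

/-- `(t, N-t)`-unshuffles : permutations strictly increasing on the first `t`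
positions and on the remaining positions. -/
def IsUnsh {N : ℕ} (t : ℕ) (σ : Equiv.Perm (Fin N)) : Prop :=
  ∀ i j : Fin N, i < j → (j.val < t ∨ t ≤ i.val) → σ i < σ j

/-- The `⋄`-product (unshuffle-sum insertion) of cochains:
`f ∈ C^{p+1}(A,A)`, `g ∈ C^{q+1}(A,A)`, `f⋄g ∈ C^{p+q+1}(A,A)`. -/
def diamond {p q : ℕ} (DA : A →ₗ[ℂ] A) (f : RawC p A A) (g : RawC q A A) :
    RawC (p + q) A A := fun a =>
  ∑ σ ∈ Finset.univ.filter (fun σ : Equiv.Perm (Fin (p + q + 1)) => IsUnsh (q + 1) σ),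
    ((Equiv.Perm.sign σ : ℤˣ) : ℤ) •
      substFun DA
        (fun v : Fin (p + q) =>
          if v.val = q then
            ∑ i : Fin (q + 1), exprQ (σ (Fin.castLE (by omega) i))
          else exprQ (σ v.castSucc))
        (fun v : Fin (p + q) =>
          if v.val = q then
            ∑ i : Fin (q + 1), exprC (σ (Fin.castLE (by omega) i))
          else exprC (σ v.castSucc))
        ((g fun i : Fin (q + 1) => a (σ (Fin.castLE (by omega) i))).sum fun β x =>
          monMul
            (Finsupp.mapDomain
              (fun i : Fin q => (Fin.cast (by omega) (Fin.castAdd p i) : Fin (p + q))) β)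
            (renameV (fun j : Fin p => (Fin.cast (by omega) (Fin.natAdd q j) : Fin (p + q)))
              (f (Fin.cons x fun j : Fin p =>
                a (σ (Fin.cast (by omega) (Fin.natAdd (q + 1) j)))))))

/-- Transport a raw cochain along an equality of degrees. -/
def castRaw {m n : ℕ} (h : m = n) (f : RawC m A M) : RawC n A M := h ▸ f

/-- The Nijenhuis–Richardson bracket `[f,g] = f⋄g - (-1)^{pq} g⋄f`. -/
def nr {p q : ℕ} (DA : A →ₗ[ℂ] A) (f : RawC p A A) (g : RawC q A A) :
    RawC (p + q) A A :=
  diamond DA f g - ((-1 : ℤ)) ^ (p * q) • castRaw (Nat.add_comm q p) (diamond DA g f)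

end CochainDefs

section Bidegree

variable [AddCommGroup A₁] [Module ℂ A₁] [AddCommGroup A₂] [Module ℂ A₂]

/-- `x` is a pure element: in `A₁` (if `b`) or in `A₂` (if `¬b`). -/
def IsPure (x : A₁ × A₂) (b : Bool) : Prop :=
  if b then x.2 = 0 else x.1 = 0

/-- `f ∈ C^{n+1}(A₁⊕A₂, A₁⊕A₂)` has bidegree `k|l`. -/
def HasBidegree {n : ℕ} (f : RawC n (A₁ × A₂) (A₁ × A₂)) (k l : ℤ) : Prop :=
  k + l = (n : ℤ) ∧
  ∀ (P : Fin (n + 1) → Bool) (a : Fin (n + 1) → A₁ × A₂),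
    (∀ i, IsPure (a i) (P i)) →
    ((((Finset.univ.filter fun i => P i = true).card : ℤ) = k + 1 →
        ∀ β, ((f a) β).2 = 0) ∧
      ((((Finset.univ.filter fun i => P i = true).card : ℤ) = k) →
        ∀ β, ((f a) β).1 = 0) ∧
      (((((Finset.univ.filter fun i => P i = true).card : ℤ) ≠ k + 1) ∧
        (((Finset.univ.filter fun i => P i = true).card : ℤ) ≠ k)) → f a = 0))

/-- The lift of `f ∈ C^{n+1}(A₂, A₁)` to a cochain on `A₁ ⊕ A₂`. -/
def liftC {n : ℕ} (f : RawC n A₂ A₁) : RawC n (A₁ × A₂) (A₁ × A₂) :=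
  fun x => Finsupp.mapRange (fun a => (a, (0 : A₂))) rfl (f fun i => (x i).2)

/-- Recover `f ∈ C^{n+1}(A₂, A₁)` from (a lift of) a cochain on `A₁ ⊕ A₂`. -/
def downC {n : ℕ} (g : RawC n (A₁ × A₂) (A₁ × A₂)) : RawC n A₂ A₁ :=
  fun v => Finsupp.mapRange Prod.fst rfl (g fun i => ((0 : A₁), v i))

/-- The lift of a `ℂ[∂]`-module homomorphism `H : A₂ → A₁` as a `1`-cochain on
`A₁ ⊕ A₂`. -/
def hatHom (H : A₂ →ₗ[ℂ] A₁) : RawC 0 (A₁ × A₂) (A₁ × A₂) :=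
  fun x => Finsupp.single 0 (H ((x 0).2), (0 : A₂))

/-- `H : A₂ → A₁` viewed as an element of `C^1(A₂, A₁)`. -/
def hatC1 (H : A₂ →ₗ[ℂ] A₁) : RawC 0 A₂ A₁ :=
  fun v => Finsupp.single 0 (H (v 0))

/-- The structure map of a λ-bracket as a 2-cochain. -/
def toC2 {A : Type*} [AddCommGroup A] (br : A → A → MP 1 A) : RawC 1 A A :=
  fun a => br (a 0) (a 1)

/-- `l₁ = d_{μ̂₂}` on `C^*(A₂, A₁)`. -/
def ell1 (DA : (A₁ × A₂) →ₗ[ℂ] (A₁ × A₂)) (mu2 : RawC 1 (A₁ × A₂) (A₁ × A₂))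
    {n : ℕ} (f : RawC n A₂ A₁) : RawC (n + 1) A₂ A₁ :=
  downC (castRaw (show 1 + n = n + 1 by omega) (nr DA mu2 (liftC f)))

/-- `l₂ = [·,·]_{μ̂₁}` on `C^*(A₂, A₁)`. -/
def ell2 (DA : (A₁ × A₂) →ₗ[ℂ] (A₁ × A₂)) (mu1 : RawC 1 (A₁ × A₂) (A₁ × A₂))
    {m n : ℕ} (f : RawC m A₂ A₁) (g : RawC n A₂ A₁) : RawC (m + n + 1) A₂ A₁ :=
  ((-1 : ℤ)) ^ m •
    downC (castRaw (show 1 + m + n = m + n + 1 by omega)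
      (nr DA (nr DA mu1 (liftC f)) (liftC g)))

/-- `l₃ = [·,·,·]_{φ̂₁}` on `C^*(A₂, A₁)`. -/
def ell3 (DA : (A₁ × A₂) →ₗ[ℂ] (A₁ × A₂)) (phi1 : RawC 1 (A₁ × A₂) (A₁ × A₂))
    {m n k : ℕ} (f : RawC m A₂ A₁) (g : RawC n A₂ A₁) (h : RawC k A₂ A₁) :
    RawC (m + n + k + 1) A₂ A₁ :=
  ((-1 : ℤ)) ^ n •
    downC (castRaw (show 1 + m + n + k = m + n + k + 1 by omega)
      (nr DA (nr DA (nr DA phi1 (liftC f)) (liftC g)) (liftC h)))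

/-- `Π` is a twilled Lie conformal algebra structure on `A₁ ⊕ A₂`. -/
def IsTwilledStr (DA : (A₁ × A₂) →ₗ[ℂ] (A₁ × A₂))
    (Pi : RawC 1 (A₁ × A₂) (A₁ × A₂)) : Prop :=
  IsCochain DA DA Pi ∧ nr DA Pi Pi = 0 ∧
    ∃ m1 m2 : RawC 1 (A₁ × A₂) (A₁ × A₂),
      HasBidegree m1 1 0 ∧ HasBidegree m2 0 1 ∧ Pi = m1 + m2

/-- `Π` is a quasi-twilled Lie conformal algebra structure on `A₁ ⊕ A₂`. -/
def IsQuasiTwilledStr (DA : (A₁ × A₂) →ₗ[ℂ] (A₁ × A₂))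
    (Pi : RawC 1 (A₁ × A₂) (A₁ × A₂)) : Prop :=
  IsCochain DA DA Pi ∧ nr DA Pi Pi = 0 ∧
    ∃ p1 m1 m2 : RawC 1 (A₁ × A₂) (A₁ × A₂),
      HasBidegree p1 2 (-1) ∧ HasBidegree m1 1 0 ∧ HasBidegree m2 0 1 ∧
        Pi = p1 + m1 + m2

end Bidegree

section Twist

variable [AddCommGroup A] [Module ℂ A]

/-- The twisting `Π^H = e^{X_Ĥ}(Π)` of a `2`-cochain by (the lift of) a
`ℂ[∂]`-module homomorphism. -/
def twist (DA : A →ₗ[ℂ] A) (Pi : RawC 1 A A) (hH : RawC 0 A A) : RawC 1 A A :=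
  Pi + nr DA Pi hH + (2 : ℂ)⁻¹ • nr DA (nr DA Pi hH) hH
    + (6 : ℂ)⁻¹ • nr DA (nr DA (nr DA Pi hH) hH) hH

end Twist

end LCAF

namespace LCAF

section GradedStructures

variable {A₁ A₂ : Type*} [AddCommGroup A₁] [Module ℂ A₁] [AddCommGroup A₂] [Module ℂ A₂]

/-- The subspace of `⊕ₙ RawC n A₂ A₁` cut out by `P` (placing `RawC n` in degree
`n+1`), equipped with `d` and `br`, is a differential graded Lie algebra. -/
structure IsDGLAOn
    (P : ∀ {n : ℕ}, RawC n A₂ A₁ → Prop)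
    (d : ∀ {n : ℕ}, RawC n A₂ A₁ → RawC (n + 1) A₂ A₁)
    (br : ∀ {m n : ℕ}, RawC m A₂ A₁ → RawC n A₂ A₁ → RawC (m + n + 1) A₂ A₁) :
    Prop where
  mem_zero : ∀ {n : ℕ}, P (0 : RawC n A₂ A₁)
  mem_add : ∀ {n : ℕ} (f g : RawC n A₂ A₁), P f → P g → P (f + g)
  mem_smul : ∀ {n : ℕ} (r : ℂ) (f : RawC n A₂ A₁), P f → P (r • f)
  mem_d : ∀ {n : ℕ} (f : RawC n A₂ A₁), P f → P (d f)
  mem_br : ∀ {m n : ℕ} (f : RawC m A₂ A₁) (g : RawC n A₂ A₁), P f → P g → P (br f g)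
  d_add : ∀ {n : ℕ} (f g : RawC n A₂ A₁), P f → P g → d (f + g) = d f + d g
  d_smul : ∀ {n : ℕ} (r : ℂ) (f : RawC n A₂ A₁), P f → d (r • f) = r • d f
  br_add_left : ∀ {m n : ℕ} (f f' : RawC m A₂ A₁) (g : RawC n A₂ A₁),
    P f → P f' → P g → br (f + f') g = br f g + br f' g
  br_smul_left : ∀ {m n : ℕ} (r : ℂ) (f : RawC m A₂ A₁) (g : RawC n A₂ A₁),
    P f → P g → br (r • f) g = r • br f g
  br_add_right : ∀ {m n : ℕ} (f : RawC m A₂ A₁) (g g' : RawC n A₂ A₁),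
    P f → P g → P g' → br f (g + g') = br f g + br f g'
  br_smul_right : ∀ {m n : ℕ} (r : ℂ) (f : RawC m A₂ A₁) (g : RawC n A₂ A₁),
    P f → P g → br f (r • g) = r • br f g
  d_squared : ∀ {n : ℕ} (f : RawC n A₂ A₁), P f → d (d f) = 0
  skew : ∀ {m n : ℕ} (f : RawC m A₂ A₁) (g : RawC n A₂ A₁), P f → P g →
    br f g = ((-1 : ℤ)) ^ ((m + 1) * (n + 1) + 1) •
      castRaw (show n + m + 1 = m + n + 1 by omega) (br g f)
  leibniz : ∀ {m n : ℕ} (f : RawC m A₂ A₁) (g : RawC n A₂ A₁), P f → P g →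
    castRaw (show m + n + 1 + 1 = m + n + 2 by omega) (d (br f g)) =
      castRaw (show m + 1 + n + 1 = m + n + 2 by omega) (br (d f) g) +
      ((-1 : ℤ)) ^ (m + 1) •
        castRaw (show m + (n + 1) + 1 = m + n + 2 by omega) (br f (d g))
  jacobi : ∀ {m n k : ℕ} (f : RawC m A₂ A₁) (g : RawC n A₂ A₁) (h : RawC k A₂ A₁),
    P f → P g → P h →
    castRaw (show m + (n + k + 1) + 1 = m + n + k + 2 by omega) (br f (br g h)) =
      castRaw (show m + n + 1 + k + 1 = m + n + k + 2 by omega) (br (br f g) h) +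
      ((-1 : ℤ)) ^ ((m + 1) * (n + 1)) •
        castRaw (show n + (m + k + 1) + 1 = m + n + k + 2 by omega) (br g (br f h))

/-- The subspace of `⊕ₙ RawC n A₂ A₁` cut out by `P` (placing `RawC n` in degree
`n+1`), with operations `l₁, l₂, l₃` (and `lᵢ = 0` for `i ≥ 4`), is an
`L∞`-algebra: graded skew-symmetry and the higher Jacobi identities
`∑_{i+j=n+1} (-1)^i ∑_{σ ∈ Sh(i,n-i)} χ(σ) l_j(l_i(x_{σ(1)},…),…) = 0`
(only `n = 1, …, 5` are nontrivial since `lᵢ = 0` for `i ≥ 4`). -/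
structure IsLInftyOn
    (P : ∀ {n : ℕ}, RawC n A₂ A₁ → Prop)
    (l1 : ∀ {n : ℕ}, RawC n A₂ A₁ → RawC (n + 1) A₂ A₁)
    (l2 : ∀ {m n : ℕ}, RawC m A₂ A₁ → RawC n A₂ A₁ → RawC (m + n + 1) A₂ A₁)
    (l3 : ∀ {m n k : ℕ}, RawC m A₂ A₁ → RawC n A₂ A₁ → RawC k A₂ A₁ →
      RawC (m + n + k + 1) A₂ A₁) : Prop where
  mem_zero : ∀ {n : ℕ}, P (0 : RawC n A₂ A₁)
  mem_add : ∀ {n : ℕ} (f g : RawC n A₂ A₁), P f → P g → P (f + g)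
  mem_smul : ∀ {n : ℕ} (r : ℂ) (f : RawC n A₂ A₁), P f → P (r • f)
  mem_l1 : ∀ {n : ℕ} (f : RawC n A₂ A₁), P f → P (l1 f)
  mem_l2 : ∀ {m n : ℕ} (f : RawC m A₂ A₁) (g : RawC n A₂ A₁), P f → P g → P (l2 f g)
  mem_l3 : ∀ {m n k : ℕ} (f : RawC m A₂ A₁) (g : RawC n A₂ A₁) (h : RawC k A₂ A₁),
    P f → P g → P h → P (l3 f g h)
  l1_add : ∀ {n : ℕ} (f g : RawC n A₂ A₁), P f → P g → l1 (f + g) = l1 f + l1 g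
  l1_smul : ∀ {n : ℕ} (r : ℂ) (f : RawC n A₂ A₁), P f → l1 (r • f) = r • l1 f
  l2_add_left : ∀ {m n : ℕ} (f f' : RawC m A₂ A₁) (g : RawC n A₂ A₁),
    P f → P f' → P g → l2 (f + f') g = l2 f g + l2 f' g
  l2_smul_left : ∀ {m n : ℕ} (r : ℂ) (f : RawC m A₂ A₁) (g : RawC n A₂ A₁),
    P f → P g → l2 (r • f) g = r • l2 f g
  l2_add_right : ∀ {m n : ℕ} (f : RawC m A₂ A₁) (g g' : RawC n A₂ A₁),
    P f → P g → P g' → l2 f (g + g') = l2 f g + l2 f g'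
  l2_smul_right : ∀ {m n : ℕ} (r : ℂ) (f : RawC m A₂ A₁) (g : RawC n A₂ A₁),
    P f → P g → l2 f (r • g) = r • l2 f g
  l3_add₁ : ∀ {m n k : ℕ} (f f' : RawC m A₂ A₁) (g : RawC n A₂ A₁) (h : RawC k A₂ A₁),
    P f → P f' → P g → P h → l3 (f + f') g h = l3 f g h + l3 f' g h
  l3_smul₁ : ∀ {m n k : ℕ} (r : ℂ) (f : RawC m A₂ A₁) (g : RawC n A₂ A₁)
    (h : RawC k A₂ A₁), P f → P g → P h → l3 (r • f) g h = r • l3 f g h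
  l3_add₂ : ∀ {m n k : ℕ} (f : RawC m A₂ A₁) (g g' : RawC n A₂ A₁) (h : RawC k A₂ A₁),
    P f → P g → P g' → P h → l3 f (g + g') h = l3 f g h + l3 f g' h
  l3_smul₂ : ∀ {m n k : ℕ} (r : ℂ) (f : RawC m A₂ A₁) (g : RawC n A₂ A₁)
    (h : RawC k A₂ A₁), P f → P g → P h → l3 f (r • g) h = r • l3 f g h
  l3_add₃ : ∀ {m n k : ℕ} (f : RawC m A₂ A₁) (g : RawC n A₂ A₁) (h h' : RawC k A₂ A₁),
    P f → P g → P h → P h' → l3 f g (h + h') = l3 f g h + l3 f g h'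
  l3_smul₃ : ∀ {m n k : ℕ} (r : ℂ) (f : RawC m A₂ A₁) (g : RawC n A₂ A₁)
    (h : RawC k A₂ A₁), P f → P g → P h → l3 f g (r • h) = r • l3 f g h
  skew2 : ∀ {m n : ℕ} (f : RawC m A₂ A₁) (g : RawC n A₂ A₁), P f → P g →
    l2 f g = ((-1 : ℤ)) ^ ((m + 1) * (n + 1) + 1) •
      castRaw (show n + m + 1 = m + n + 1 by omega) (l2 g f)
  skew3a : ∀ {m n k : ℕ} (f : RawC m A₂ A₁) (g : RawC n A₂ A₁) (h : RawC k A₂ A₁),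
    P f → P g → P h →
    l3 f g h = ((-1 : ℤ)) ^ ((m + 1) * (n + 1) + 1) •
      castRaw (show n + m + k + 1 = m + n + k + 1 by omega) (l3 g f h)
  skew3b : ∀ {m n k : ℕ} (f : RawC m A₂ A₁) (g : RawC n A₂ A₁) (h : RawC k A₂ A₁),
    P f → P g → P h →
    l3 f g h = ((-1 : ℤ)) ^ ((n + 1) * (k + 1) + 1) •
      castRaw (show m + k + n + 1 = m + n + k + 1 by omega) (l3 f h g)
  jac1 : ∀ {n : ℕ} (f : RawC n A₂ A₁), P f → l1 (l1 f) = 0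
  jac2 : ∀ {m n : ℕ} (f : RawC m A₂ A₁) (g : RawC n A₂ A₁), P f → P g →
    castRaw (show m + n + 1 + 1 = m + n + 2 by omega) (l1 (l2 f g))
      - castRaw (show m + 1 + n + 1 = m + n + 2 by omega) (l2 (l1 f) g)
      + ((-1 : ℤ)) ^ ((m + 1) * (n + 1)) •
          castRaw (show n + 1 + m + 1 = m + n + 2 by omega) (l2 (l1 g) f)
      = 0
  jac3 : ∀ {m n k : ℕ} (f : RawC m A₂ A₁) (g : RawC n A₂ A₁) (h : RawC k A₂ A₁),
    P f → P g → P h →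
    -(castRaw (show m + 1 + n + k + 1 = m + n + k + 2 by omega) (l3 (l1 f) g h))
      + ((-1 : ℤ)) ^ ((m + 1) * (n + 1)) •
          castRaw (show n + 1 + m + k + 1 = m + n + k + 2 by omega) (l3 (l1 g) f h)
      - ((-1 : ℤ)) ^ ((k + 1) * ((m + 1) + (n + 1))) •
          castRaw (show k + 1 + m + n + 1 = m + n + k + 2 by omega) (l3 (l1 h) f g)
      + castRaw (show m + n + 1 + k + 1 = m + n + k + 2 by omega) (l2 (l2 f g) h)
      - ((-1 : ℤ)) ^ ((n + 1) * (k + 1)) •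
          castRaw (show m + k + 1 + n + 1 = m + n + k + 2 by omega) (l2 (l2 f h) g)
      + ((-1 : ℤ)) ^ ((m + 1) * ((n + 1) + (k + 1))) •
          castRaw (show n + k + 1 + m + 1 = m + n + k + 2 by omega) (l2 (l2 g h) f)
      - castRaw (show m + n + k + 1 + 1 = m + n + k + 2 by omega) (l1 (l3 f g h))
      = 0
  jac4 : ∀ {m n k l : ℕ} (f : RawC m A₂ A₁) (g : RawC n A₂ A₁) (h : RawC k A₂ A₁)
    (e : RawC l A₂ A₁), P f → P g → P h → P e →
    castRaw (show m + n + 1 + k + l + 1 = m + n + k + l + 2 by omega) (l3 (l2 f g) h e)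
      - ((-1 : ℤ)) ^ ((n + 1) * (k + 1)) •
          castRaw (show m + k + 1 + n + l + 1 = m + n + k + l + 2 by omega)
            (l3 (l2 f h) g e)
      + ((-1 : ℤ)) ^ ((l + 1) * ((n + 1) + (k + 1))) •
          castRaw (show m + l + 1 + n + k + 1 = m + n + k + l + 2 by omega)
            (l3 (l2 f e) g h)
      + ((-1 : ℤ)) ^ ((m + 1) * ((n + 1) + (k + 1))) •
          castRaw (show n + k + 1 + m + l + 1 = m + n + k + l + 2 by omega)
            (l3 (l2 g h) f e)
      - ((-1 : ℤ)) ^ ((m + 1) * (n + 1) + (m + 1) * (l + 1) + (k + 1) * (l + 1)) •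
          castRaw (show n + l + 1 + m + k + 1 = m + n + k + l + 2 by omega)
            (l3 (l2 g e) f h)
      + ((-1 : ℤ)) ^ (((m + 1) + (n + 1)) * ((k + 1) + (l + 1))) •
          castRaw (show k + l + 1 + m + n + 1 = m + n + k + l + 2 by omega)
            (l3 (l2 h e) f g)
      - castRaw (show m + n + k + 1 + l + 1 = m + n + k + l + 2 by omega)
          (l2 (l3 f g h) e)
      + ((-1 : ℤ)) ^ ((k + 1) * (l + 1)) •
          castRaw (show m + n + l + 1 + k + 1 = m + n + k + l + 2 by omega)
            (l2 (l3 f g e) h)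
      - ((-1 : ℤ)) ^ ((n + 1) * ((k + 1) + (l + 1))) •
          castRaw (show m + k + l + 1 + n + 1 = m + n + k + l + 2 by omega)
            (l2 (l3 f h e) g)
      + ((-1 : ℤ)) ^ ((m + 1) * ((n + 1) + (k + 1) + (l + 1))) •
          castRaw (show n + k + l + 1 + m + 1 = m + n + k + l + 2 by omega)
            (l2 (l3 g h e) f)
      = 0
  jac5 : ∀ {a b c d e : ℕ} (x1 : RawC a A₂ A₁) (x2 : RawC b A₂ A₁) (x3 : RawC c A₂ A₁)
    (x4 : RawC d A₂ A₁) (x5 : RawC e A₂ A₁), P x1 → P x2 → P x3 → P x4 → P x5 →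
    castRaw (show a + b + c + 1 + d + e + 1 = a + b + c + d + e + 2 by omega)
        (l3 (l3 x1 x2 x3) x4 x5)
      - ((-1 : ℤ)) ^ ((c + 1) * (d + 1)) •
          castRaw (show a + b + d + 1 + c + e + 1 = a + b + c + d + e + 2 by omega)
            (l3 (l3 x1 x2 x4) x3 x5)
      + ((-1 : ℤ)) ^ ((e + 1) * ((c + 1) + (d + 1))) •
          castRaw (show a + b + e + 1 + c + d + 1 = a + b + c + d + e + 2 by omega)
            (l3 (l3 x1 x2 x5) x3 x4)
      + ((-1 : ℤ)) ^ ((b + 1) * ((c + 1) + (d + 1))) •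
          castRaw (show a + c + d + 1 + b + e + 1 = a + b + c + d + e + 2 by omega)
            (l3 (l3 x1 x3 x4) x2 x5)
      - ((-1 : ℤ)) ^ ((b + 1) * (c + 1) + (b + 1) * (e + 1) + (d + 1) * (e + 1)) •
          castRaw (show a + c + e + 1 + b + d + 1 = a + b + c + d + e + 2 by omega)
            (l3 (l3 x1 x3 x5) x2 x4)
      + ((-1 : ℤ)) ^ (((b + 1) + (c + 1)) * ((d + 1) + (e + 1))) •
          castRaw (show a + d + e + 1 + b + c + 1 = a + b + c + d + e + 2 by omega)
            (l3 (l3 x1 x4 x5) x2 x3)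
      - ((-1 : ℤ)) ^ ((a + 1) * ((b + 1) + (c + 1) + (d + 1))) •
          castRaw (show b + c + d + 1 + a + e + 1 = a + b + c + d + e + 2 by omega)
            (l3 (l3 x2 x3 x4) x1 x5)
      + ((-1 : ℤ)) ^ ((a + 1) * ((b + 1) + (c + 1) + (e + 1)) + (d + 1) * (e + 1)) •
          castRaw (show b + c + e + 1 + a + d + 1 = a + b + c + d + e + 2 by omega)
            (l3 (l3 x2 x3 x5) x1 x4)
      - ((-1 : ℤ)) ^ ((a + 1) * ((b + 1) + (d + 1) + (e + 1)) + (c + 1) * ((d + 1) + (e + 1))) •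
          castRaw (show b + d + e + 1 + a + c + 1 = a + b + c + d + e + 2 by omega)
            (l3 (l3 x2 x4 x5) x1 x3)
      + ((-1 : ℤ)) ^ (((a + 1) + (b + 1)) * ((c + 1) + (d + 1) + (e + 1))) •
          castRaw (show c + d + e + 1 + a + b + 1 = a + b + c + d + e + 2 by omega)
            (l3 (l3 x3 x4 x5) x1 x2)
      = 0

end GradedStructures

section TwistHom

variable {A₁ A₂ : Type*} [AddCommGroup A₁] [Module ℂ A₁] [AddCommGroup A₂] [Module ℂ A₂]

/-- `e^Ĥ = Id + Ĥ` as a linear endomorphism of `A₁ ⊕ A₂`. -/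
def eHp (H : A₂ →ₗ[ℂ] A₁) : (A₁ × A₂) →ₗ[ℂ] (A₁ × A₂) :=
  LinearMap.id + (LinearMap.inl ℂ A₁ A₂).comp (H.comp (LinearMap.snd ℂ A₁ A₂))

/-- `e^{-Ĥ} = Id - Ĥ` as a linear endomorphism of `A₁ ⊕ A₂`. -/
def eHm (H : A₂ →ₗ[ℂ] A₁) : (A₁ × A₂) →ₗ[ℂ] (A₁ × A₂) :=
  LinearMap.id - (LinearMap.inl ℂ A₁ A₂).comp (H.comp (LinearMap.snd ℂ A₁ A₂))

end TwistHom

end LCAF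

namespace LCAF

/-! ### Auxiliary lemmas for Statement 17 -/

section Aux17

variable {k : ℕ} {A A' M N : Type*}

section Basic

variable [AddCommGroup M] [Module ℂ M] [AddCommGroup N] [Module ℂ N]

lemma mapCoeff_def (g : M →ₗ[ℂ] N) (p : MP k M) :
    mapCoeff g p = Finsupp.mapRange g (map_zero g) p := rfl

/-- `monMul` as an additive monoid homomorphism. -/
def monMulHom (α : Fin k →₀ ℕ) : MP k M →+ MP k M :=
  Finsupp.mapDomain.addMonoidHom fun β => α + β

lemma monMulHom_apply (α : Fin k →₀ ℕ) (p : MP k M) : monMulHom α p = monMul α p := rfl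

lemma monMul_zero' (α : Fin k →₀ ℕ) : monMul α (0 : MP k M) = 0 :=
  Finsupp.mapDomain_zero

lemma monMul_add' (α : Fin k →₀ ℕ) (p q : MP k M) :
    monMul α (p + q) = monMul α p + monMul α q := Finsupp.mapDomain_add

lemma monMul_neg' (α : Fin k →₀ ℕ) (p : MP k M) : monMul α (-p) = -monMul α p :=
  map_neg (monMulHom α) p

lemma monMul_monMul' (α β : Fin k →₀ ℕ) (p : MP k M) :
    monMul α (monMul β p) = monMul (α + β) p := by
  unfold monMul
  rw [← Finsupp.mapDomain_comp]
  congr 1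
  funext γ
  simp [Function.comp, add_assoc]

lemma monMul_id' (p : MP k M) : monMul (0 : Fin k →₀ ℕ) p = p := by
  unfold monMul
  rw [show (fun β => (0 : Fin k →₀ ℕ) + β) = id from funext fun β => zero_add β,
    Finsupp.mapDomain_id]

/-- `mapCoeff` as an additive monoid homomorphism. -/
def mapCoeffHom (g : M →ₗ[ℂ] N) : MP k M →+ MP k N :=
  Finsupp.mapRange.addMonoidHom g.toAddMonoidHom

lemma mapCoeffHom_apply (g : M →ₗ[ℂ] N) (p : MP k M) :
    mapCoeffHom g p = mapCoeff g p := rfl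

lemma mapCoeff_zero' (g : M →ₗ[ℂ] N) : mapCoeff g (0 : MP k M) = 0 :=
  map_zero (mapCoeffHom (k := k) g)

lemma mapCoeff_add' (g : M →ₗ[ℂ] N) (p q : MP k M) :
    mapCoeff g (p + q) = mapCoeff g p + mapCoeff g q :=
  map_add (mapCoeffHom (k := k) g) p q

lemma mapCoeff_smul' (g : M →ₗ[ℂ] N) (r : ℂ) (p : MP k M) :
    mapCoeff g (r • p) = r • mapCoeff g p :=
  Finsupp.mapRange_smul r p (fun x => map_smul g r x)

lemma mapCoeff_single (g : M →ₗ[ℂ] N) (β : Fin k →₀ ℕ) (m : M) :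
    mapCoeff g (Finsupp.single β m) = Finsupp.single β (g m) :=
  Finsupp.mapRange_single

lemma mapCoeff_monMul (g : M →ₗ[ℂ] N) (α : Fin k →₀ ℕ) (p : MP k M) :
    mapCoeff g (monMul α p) = monMul α (mapCoeff g p) :=
  (Finsupp.mapDomain_mapRange (fun β => α + β) p (⇑g) (map_zero g) (map_add g)).symm

/-- `renameV` as an additive monoid homomorphism. -/
def renameHom {k' : ℕ} (h : Fin k → Fin k') : MP k M →+ MP k' M :=
  Finsupp.mapDomain.addMonoidHom (Finsupp.mapDomain h)

lemma renameHom_apply {k' : ℕ} (h : Fin k → Fin k') (p : MP k M) :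
    renameHom h p = renameV h p := rfl

lemma renameV_mapCoeff {k' : ℕ} (h : Fin k → Fin k') (g : M →ₗ[ℂ] N) (p : MP k M) :
    renameV h (mapCoeff g p) = mapCoeff g (renameV h p) :=
  Finsupp.mapDomain_mapRange (Finsupp.mapDomain h) p (⇑g) (map_zero g) (map_add g)

lemma renameV_monMul {k' : ℕ} (h : Fin k → Fin k') (α : Fin k →₀ ℕ) (p : MP k M) :
    renameV h (monMul α p) = monMul (Finsupp.mapDomain h α) (renameV h p) := by
  unfold renameV monMul
  rw [← Finsupp.mapDomain_comp, ← Finsupp.mapDomain_comp]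
  congr 1
  funext β
  simp [Function.comp, Finsupp.mapDomain_add]

lemma renameV_single {k' : ℕ} (h : Fin k → Fin k') (α : Fin k →₀ ℕ) (m : M) :
    renameV h (Finsupp.single α m) = Finsupp.single (Finsupp.mapDomain h α) m :=
  Finsupp.mapDomain_single

lemma scaleP_zero_right (q : MP k ℂ) : scaleP q (0 : MP k M) = 0 := by
  unfold scaleP
  simp [monMul_zero']

lemma scaleP_add_right (q : MP k ℂ) (p p' : MP k M) :
    scaleP q (p + p') = scaleP q p + scaleP q p' := by
  unfold scaleP
  simp only [monMul_add', smul_add, Finsupp.sum]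
  exact Finset.sum_add_distrib

lemma scaleP_single_left (κ : Fin k →₀ ℕ) (r : ℂ) (p : MP k M) :
    scaleP (Finsupp.single κ r) p = r • monMul κ p := by
  unfold scaleP
  rw [Finsupp.sum_single_index (zero_smul ℂ (monMul κ p))]

lemma scaleP_add_left (q q' : MP k ℂ) (p : MP k M) :
    scaleP (q + q') p = scaleP q p + scaleP q' p :=
  Finsupp.sum_add_index' (fun α => zero_smul _ _) (fun α r r' => add_smul r r' _)

lemma scaleP_X (i : Fin k) (p : MP k M) :
    scaleP (Xv i) p = monMul (Finsupp.single i 1) p := by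
  unfold Xv
  rw [scaleP_single_left, one_smul]

lemma scaleP_Xsum (p : MP 2 M) :
    scaleP (Xv 0 + Xv 1) p =
      monMul (Finsupp.single (0 : Fin 2) 1) p + monMul (Finsupp.single (1 : Fin 2) 1) p := by
  rw [scaleP_add_left, scaleP_X, scaleP_X]

lemma scaleP_negX0 (p : MP 1 M) :
    scaleP (-(Xv 0)) p = -(monMul lam1 p) := by
  rw [show -(Xv (0 : Fin 1)) = Finsupp.single lam1 (-1 : ℂ) from by
    rw [show (Xv (0 : Fin 1)) = Finsupp.single lam1 (1 : ℂ) from rfl]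
    exact (Finsupp.single_neg _ _).symm]
  rw [scaleP_single_left, neg_one_smul]

lemma opnd_zero (D : M →ₗ[ℂ] M) (q : MP k ℂ) (c : ℂ) : opnd D q c (0 : MP k M) = 0 := by
  unfold opnd
  rw [scaleP_zero_right, mapCoeff_zero', smul_zero, add_zero]

lemma opnd_add (D : M →ₗ[ℂ] M) (q : MP k ℂ) (c : ℂ) (p p' : MP k M) :
    opnd D q c (p + p') = opnd D q c p + opnd D q c p' := by
  unfold opnd
  rw [scaleP_add_right, mapCoeff_add', smul_add]
  abel

/-- `opnd` as an additive monoid homomorphism. -/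
def opndHom (D : M →ₗ[ℂ] M) (q : MP k ℂ) (c : ℂ) : MP k M →+ MP k M :=
  AddMonoidHom.mk' (opnd D q c) (opnd_add D q c)

lemma opndHom_apply (D : M →ₗ[ℂ] M) (q : MP k ℂ) (c : ℂ) (p : MP k M) :
    opndHom D q c p = opnd D q c p := rfl

lemma opnd_iter_zero (D : M →ₗ[ℂ] M) (q : MP k ℂ) (c : ℂ) (n : ℕ) :
    (opnd D q c)^[n] (0 : MP k M) = 0 := by
  induction n with
  | zero => rfl
  | succ n ih => rw [Function.iterate_succ_apply', ih, opnd_zero]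

lemma opnd_iter_add (D : M →ₗ[ℂ] M) (q : MP k ℂ) (c : ℂ) (n : ℕ) (p p' : MP k M) :
    (opnd D q c)^[n] (p + p') = (opnd D q c)^[n] p + (opnd D q c)^[n] p' := by
  induction n with
  | zero => rfl
  | succ n ih => rw [Function.iterate_succ_apply', Function.iterate_succ_apply',
      Function.iterate_succ_apply', ih, opnd_add]

lemma opnd_c0 (D : M →ₗ[ℂ] M) (q : MP k ℂ) (p : MP k M) :
    opnd D q 0 p = scaleP q p := by
  unfold opnd
  rw [zero_smul, add_zero]

lemma opnd_negX0 (D : M →ₗ[ℂ] M) (p : MP 1 M) :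
    opnd D (-(Xv 0)) (-1) p = -(monMul lam1 p) + -(mapCoeff D p) := by
  unfold opnd
  rw [scaleP_negX0, neg_one_smul]

/-- One-variable substitution operator, bundled. -/
def sOneHom (D : M →ₗ[ℂ] M) {k' : ℕ} (q : MP k' ℂ) (c : ℂ) : MP 1 M →+ MP k' M :=
  AddMonoidHom.mk'
    (fun p => p.sum fun α m => (opnd D q c)^[α 0] (Finsupp.single 0 m))
    (fun p p' => Finsupp.sum_add_index'
      (fun α => by rw [Finsupp.single_zero, opnd_iter_zero])
      (fun α m m' => by rw [Finsupp.single_add, opnd_iter_add]))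

lemma sOneHom_apply (D : M →ₗ[ℂ] M) {k' : ℕ} (q : MP k' ℂ) (c : ℂ) (p : MP 1 M) :
    sOneHom D q c p = p.sum fun α m => (opnd D q c)^[α 0] (Finsupp.single 0 m) := rfl

lemma substFun_one (D : M →ₗ[ℂ] M) {k' : ℕ} (q : Fin 1 → MP k' ℂ) (c : Fin 1 → ℂ)
    (p : MP 1 M) :
    substFun D q c p = sOneHom D (q 0) (c 0) p := by
  unfold substFun
  rw [sOneHom_apply]
  refine Finsupp.sum_congr fun α _ => ?_
  simp only [List.ofFn_succ, List.ofFn_zero, List.foldr_cons, List.foldr_nil]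
  rfl

lemma sub1_eq (D : M →ₗ[ℂ] M) (p : MP 1 M) :
    sub1 D p = sOneHom D (-(Xv 0)) (-1) p :=
  substFun_one D _ _ p

lemma sOne_single (D : M →ₗ[ℂ] M) {k' : ℕ} (q : MP k' ℂ) (c : ℂ)
    (α : Fin 1 →₀ ℕ) (m : M) :
    sOneHom D q c (Finsupp.single α m) = (opnd D q c)^[α 0] (Finsupp.single 0 m) := by
  rw [sOneHom_apply,
    Finsupp.sum_single_index (by rw [Finsupp.single_zero, opnd_iter_zero])]

lemma sOne_monMul (D : M →ₗ[ℂ] M) {k' : ℕ} (q : MP k' ℂ) (c : ℂ) (p : MP 1 M) :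
    sOneHom D q c (monMul lam1 p) = opnd D q c (sOneHom D q c p) := by
  rw [show monMul lam1 p = Finsupp.mapDomain (fun β => lam1 + β) p from rfl,
    sOneHom_apply, Finsupp.sum_mapDomain_index_inj (add_right_injective lam1),
    show opnd D q c (sOneHom D q c p) = opndHom D q c (sOneHom D q c p) from rfl,
    sOneHom_apply, map_finsuppSum]
  refine Finsupp.sum_congr fun α _ => ?_
  rw [show (lam1 + α) 0 = 1 + α 0 from by
    simp [lam1, Finsupp.add_apply]]
  rw [Function.iterate_add_apply, Function.iterate_one]
  rfl

lemma fin1_index (α : Fin 1 →₀ ℕ) : α = Finsupp.single 0 (α 0) := by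
  refine Finsupp.ext fun i => ?_
  have h : i = 0 := Subsingleton.elim i 0
  subst h
  simp

end Basic

section BinaryAux

variable [AddCommGroup M] [Module ℂ M]

lemma opE_eq {B : Type*} (DM : M →ₗ[ℂ] M) (F : A → B → MP 1 M) (q : MP 2 ℂ) (c : ℂ)
    (a : A) (b : B) :
    opE DM F q c a b = sOneHom DM q c (F a b) :=
  substFun_one DM _ _ _

lemma opL_eq {B : Type*} [AddCommGroup A'] [Module ℂ A'] (DM : M →ₗ[ℂ] M)
    (F : A' → B → MP 1 M) (q : MP 2 ℂ) (c : ℂ) (w : B) (p : MP 2 A') :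
    opL DM F q c p w = p.sum fun β x => monMul β (sOneHom DM q c (F x w)) := by
  unfold opL
  exact Finsupp.sum_congr fun β _ => by rw [opE_eq]

lemma opR_eq {B : Type*} [AddCommGroup B] [Module ℂ B] (DM : M →ₗ[ℂ] M)
    (F : A → B → MP 1 M) (q : MP 2 ℂ) (c : ℂ) (a : A) (p : MP 2 B) :
    opR DM F q c a p = p.sum fun β x => monMul β (sOneHom DM q c (F a x)) := by
  unfold opR
  exact Finsupp.sum_congr fun β _ => by rw [opE_eq]

lemma opL_monMul {B : Type*} [AddCommGroup A'] [Module ℂ A'] (DM : M →ₗ[ℂ] M)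
    (F : A' → B → MP 1 M) (q : MP 2 ℂ) (c : ℂ) (w : B) (γ : Fin 2 →₀ ℕ) (p : MP 2 A') :
    opL DM F q c (monMul γ p) w = monMul γ (opL DM F q c p w) := by
  rw [opL_eq, opL_eq,
    show monMul γ p = Finsupp.mapDomain (fun β => γ + β) p from rfl,
    Finsupp.sum_mapDomain_index_inj (add_right_injective γ),
    ← monMulHom_apply, map_finsuppSum]
  exact Finsupp.sum_congr fun β _ => by
    rw [monMulHom_apply, monMul_monMul']

/-- `opL` (in its polynomial argument) as an additive monoid homomorphism. -/
def opLHom {B : Type*} [AddCommGroup A'] [Module ℂ A'] (DM : M →ₗ[ℂ] M)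
    (F : A' → B → MP 1 M) (q : MP 2 ℂ) (c : ℂ) (w : B)
    (h0 : F 0 w = 0) (hadd : ∀ x y : A', F (x + y) w = F x w + F y w) :
    MP 2 A' →+ MP 2 M :=
  AddMonoidHom.mk' (fun p => opL DM F q c p w) (fun p p' => by
    show opL DM F q c (p + p') w = opL DM F q c p w + opL DM F q c p' w
    rw [opL_eq, opL_eq, opL_eq]
    exact Finsupp.sum_add_index'
      (fun β => by rw [h0, map_zero, monMul_zero'])
      (fun β x x' => by rw [hadd, map_add, monMul_add']))

lemma opL_mapCoeff {B : Type*} [AddCommGroup A'] [Module ℂ A'] [AddCommGroup N]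
    [Module ℂ N] (DM : M →ₗ[ℂ] M) (F : A' → B → MP 1 M) (q : MP 2 ℂ) (c : ℂ) (w : B)
    (g : N →ₗ[ℂ] A') (h0 : F 0 w = 0) (p : MP 2 N) :
    opL DM F q c (mapCoeff g p) w =
      p.sum fun β x => monMul β (sOneHom DM q c (F (g x) w)) := by
  rw [opL_eq, mapCoeff_def]
  rw [Finsupp.sum_mapRange_index fun β => by
    rw [h0, map_zero, monMul_zero']]

lemma opL_single {B : Type*} [AddCommGroup A'] [Module ℂ A'] (DM : M →ₗ[ℂ] M)
    (F : A' → B → MP 1 M) (q : MP 2 ℂ) (c : ℂ) (w : B)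
    (h0 : F 0 w = 0) (β : Fin 2 →₀ ℕ) (x : A') :
    opL DM F q c (Finsupp.single β x) w = monMul β (sOneHom DM q c (F x w)) := by
  rw [opL_eq, Finsupp.sum_single_index (by rw [h0, map_zero, monMul_zero'])]

end BinaryAux

section Conversions

variable [AddCommGroup A] [Module ℂ A] [AddCommGroup M] [Module ℂ M]

lemma opR_o (DM : M →ₗ[ℂ] M) (rho : A → M → MP 1 M) (T : M →ₗ[ℂ] A)
    (q : MP 2 ℂ) (c : ℂ) (a : M) (p : MP 2 M) :
    opR DM (fun u v => rho (T u) v) q c a p = opR DM rho q c (T a) p := rfl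

lemma opL_o (DM : M →ₗ[ℂ] M) (rho : A → M → MP 1 M) (T : M →ₗ[ℂ] A)
    (q : MP 2 ℂ) (c : ℂ) (w : M) (h0 : rho 0 w = 0) (p : MP 2 M) :
    opL DM (fun u v => rho (T u) v) q c p w = opL DM rho q c (mapCoeff T p) w := by
  rw [opL_eq, opL_mapCoeff DM rho q c w T h0]

lemma opR_v (DM : M →ₗ[ℂ] M) (phi : A → A → MP 1 M) (T : M →ₗ[ℂ] A)
    (q : MP 2 ℂ) (c : ℂ) (a : M) (h0 : phi (T a) 0 = 0) (p : MP 2 M) :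
    opR DM (fun u v => phi (T u) (T v)) q c a p =
      opR DM phi q c (T a) (mapCoeff T p) := by
  rw [opR_eq, opR_eq, mapCoeff_def]
  rw [Finsupp.sum_mapRange_index fun β => by
    rw [h0, map_zero, monMul_zero']]

lemma opL_v (DM : M →ₗ[ℂ] M) (phi : A → A → MP 1 M) (T : M →ₗ[ℂ] A)
    (q : MP 2 ℂ) (c : ℂ) (w : M) (h0 : phi 0 (T w) = 0) (p : MP 2 M) :
    opL DM (fun u v => phi (T u) (T v)) q c p w =
      opL DM phi q c (mapCoeff T p) (T w) := by
  rw [opL_eq, opL_mapCoeff DM phi q c (T w) T h0]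

lemma mapCoeff_comm (T : M →ₗ[ℂ] A) (DM : M →ₗ[ℂ] M) (D : A →ₗ[ℂ] A)
    (hT : ∀ m : M, T (DM m) = D (T m)) (p : MP k M) :
    mapCoeff T (mapCoeff DM p) = mapCoeff D (mapCoeff T p) := by
  ext β
  simp [mapCoeff_def, Finsupp.mapRange_apply, hT]

lemma mapCoeff_scaleP (T : M →ₗ[ℂ] A) (q : MP k ℂ) (p : MP k M) :
    mapCoeff T (scaleP q p) = scaleP q (mapCoeff T p) := by
  unfold scaleP
  rw [← mapCoeffHom_apply, map_finsuppSum]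
  exact Finsupp.sum_congr fun α r => by
    rw [mapCoeffHom_apply, mapCoeff_smul', mapCoeff_monMul]

lemma mapCoeff_opnd (T : M →ₗ[ℂ] A) (DM : M →ₗ[ℂ] M) (D : A →ₗ[ℂ] A)
    (hT : ∀ m : M, T (DM m) = D (T m)) (q : MP k ℂ) (c : ℂ) (p : MP k M) :
    mapCoeff T (opnd DM q c p) = opnd D q c (mapCoeff T p) := by
  unfold opnd
  rw [mapCoeff_add', mapCoeff_scaleP, mapCoeff_smul', mapCoeff_comm T DM D hT]

lemma mapCoeff_iter_opnd (T : M →ₗ[ℂ] A) (DM : M →ₗ[ℂ] M) (D : A →ₗ[ℂ] A)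
    (hT : ∀ m : M, T (DM m) = D (T m)) (q : MP k ℂ) (c : ℂ) (n : ℕ) (p : MP k M) :
    mapCoeff T ((opnd DM q c)^[n] p) = (opnd D q c)^[n] (mapCoeff T p) := by
  induction n with
  | zero => rfl
  | succ n ih => rw [Function.iterate_succ_apply', Function.iterate_succ_apply',
      mapCoeff_opnd T DM D hT, ih]

lemma mapT_sub1 (T : M →ₗ[ℂ] A) (DM : M →ₗ[ℂ] M) (D : A →ₗ[ℂ] A)
    (hT : ∀ m : M, T (DM m) = D (T m)) (p : MP 1 M) :
    mapCoeff T (sub1 DM p) = sub1 D (mapCoeff T p) := by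
  rw [sub1_eq, sub1_eq, sOneHom_apply, ← mapCoeffHom_apply, map_finsuppSum,
    sOneHom_apply, mapCoeff_def,
    Finsupp.sum_mapRange_index fun α => by
      rw [Finsupp.single_zero, opnd_iter_zero]]
  exact Finsupp.sum_congr fun α _ => by
    rw [mapCoeffHom_apply, mapCoeff_iter_opnd T DM D hT, mapCoeff_single]

lemma shift_lemma (D : A →ₗ[ℂ] A) (DM : M →ₗ[ℂ] M) (rho : A → M → MP 1 M) (w : M)
    (h0 : rho 0 w = 0)
    (hadd : ∀ x y : A, rho (x + y) w = rho x w + rho y w)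
    (hd : ∀ x : A, rho (D x) w = -(monMul lam1 (rho x w)))
    (P : MP 1 A) :
    opL DM rho (Xv 0 + Xv 1) 0 (renameV (fun _ : Fin 1 => (0 : Fin 2)) (sub1 D P)) w
      = opL DM rho (Xv 0 + Xv 1) 0 (renameV (fun _ : Fin 1 => (1 : Fin 2)) P) w := by
  classical
  let Kh : MP 1 A →+ MP 2 M :=
    (opLHom DM rho (Xv 0 + Xv 1) 0 w h0 hadd).comp
      (renameHom (fun _ : Fin 1 => (0 : Fin 2)))
  let Kh' : MP 1 A →+ MP 2 M :=
    (opLHom DM rho (Xv 0 + Xv 1) 0 w h0 hadd).comp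
      (renameHom (fun _ : Fin 1 => (1 : Fin 2)))
  have A1 : ∀ p : MP 1 A,
      Kh (monMul lam1 p) = monMul (Finsupp.single (0 : Fin 2) 1) (Kh p) := by
    intro p
    show opL DM rho (Xv 0 + Xv 1) 0
        (renameV (fun _ : Fin 1 => (0 : Fin 2)) (monMul lam1 p)) w = _
    rw [renameV_monMul,
      show Finsupp.mapDomain (fun _ : Fin 1 => (0 : Fin 2)) lam1
          = Finsupp.single (0 : Fin 2) 1 from by simp [lam1],
      opL_monMul]
    rfl
  have A2 : ∀ p : MP 1 A,
      Kh (mapCoeff D p) =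
        -(monMul (Finsupp.single (0 : Fin 2) 1) (Kh p)
          + monMul (Finsupp.single (1 : Fin 2) 1) (Kh p)) := by
    intro p
    have step : ∀ (β : Fin 2 →₀ ℕ) (x : A),
        monMul β (sOneHom DM (Xv 0 + Xv 1) 0 (rho (D x) w)) =
          -(monMulHom (Finsupp.single (0 : Fin 2) 1)
              (monMul β (sOneHom DM (Xv 0 + Xv 1) 0 (rho x w)))
            + monMulHom (Finsupp.single (1 : Fin 2) 1)
              (monMul β (sOneHom DM (Xv 0 + Xv 1) 0 (rho x w)))) := by
      intro β x
      rw [hd, map_neg, sOne_monMul, opnd_c0, scaleP_Xsum, monMul_neg', monMul_add',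
        monMul_monMul', monMul_monMul', monMulHom_apply, monMulHom_apply,
        monMul_monMul', monMul_monMul',
        add_comm β (Finsupp.single (0 : Fin 2) 1),
        add_comm β (Finsupp.single (1 : Fin 2) 1)]
    have hKrepr : ∀ p' : MP 2 A,
        opL DM rho (Xv 0 + Xv 1) 0 p' w =
          ∑ β ∈ p'.support,
            monMul β (sOneHom DM (Xv 0 + Xv 1) 0 (rho (p' β) w)) := by
      intro p'
      rw [opL_eq]
      rfl
    show opL DM rho (Xv 0 + Xv 1) 0
        (renameV (fun _ : Fin 1 => (0 : Fin 2)) (mapCoeff D p)) w = _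
    rw [renameV_mapCoeff]
    set P' := renameV (fun _ : Fin 1 => (0 : Fin 2)) p with hP'
    rw [opL_mapCoeff DM rho (Xv 0 + Xv 1) 0 w D h0]
    have hsum : (P'.sum fun β x =>
          monMul β (sOneHom DM (Xv 0 + Xv 1) 0 (rho (D x) w)))
        = P'.sum fun β x =>
          -(monMulHom (Finsupp.single (0 : Fin 2) 1)
              (monMul β (sOneHom DM (Xv 0 + Xv 1) 0 (rho x w)))
            + monMulHom (Finsupp.single (1 : Fin 2) 1)
              (monMul β (sOneHom DM (Xv 0 + Xv 1) 0 (rho x w)))) :=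
      Finsupp.sum_congr fun β _ => step β _
    rw [hsum]
    show (∑ β ∈ P'.support,
        -(monMulHom (Finsupp.single (0 : Fin 2) 1)
            (monMul β (sOneHom DM (Xv 0 + Xv 1) 0 (rho (P' β) w)))
          + monMulHom (Finsupp.single (1 : Fin 2) 1)
            (monMul β (sOneHom DM (Xv 0 + Xv 1) 0 (rho (P' β) w))))) = _
    rw [Finset.sum_neg_distrib, Finset.sum_add_distrib, ← map_sum, ← map_sum]
    show -(monMulHom (Finsupp.single (0 : Fin 2) 1)
          (∑ β ∈ P'.support, monMul β (sOneHom DM (Xv 0 + Xv 1) 0 (rho (P' β) w)))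
        + monMulHom (Finsupp.single (1 : Fin 2) 1)
          (∑ β ∈ P'.support, monMul β (sOneHom DM (Xv 0 + Xv 1) 0 (rho (P' β) w)))) = _
    rw [← hKrepr P']
    rfl
  have claimA : ∀ p : MP 1 A,
      Kh (opnd D (-(Xv 0)) (-1) p) = monMul (Finsupp.single (1 : Fin 2) 1) (Kh p) := by
    intro p
    rw [opnd_negX0, map_add, map_neg, map_neg, A1, A2]
    abel
  have key : ∀ (n : ℕ) (x : A),
      Kh ((opnd D (-(Xv 0)) (-1))^[n] (Finsupp.single 0 x)) =
        monMul (Finsupp.single (1 : Fin 2) n)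
          (Kh (Finsupp.single (0 : Fin 1 →₀ ℕ) x)) := by
    intro n
    induction n with
    | zero =>
      intro x
      rw [Function.iterate_zero, id_eq, Finsupp.single_zero, monMul_id']
    | succ n ih =>
      intro x
      rw [Function.iterate_succ_apply', claimA, ih, monMul_monMul',
        ← Finsupp.single_add, Nat.add_comm]
  have hsingle : ∀ (α : Fin 1 →₀ ℕ) (x : A),
      Kh (sub1 D (Finsupp.single α x)) = Kh' (Finsupp.single α x) := by
    intro α x
    have e0 : Kh (Finsupp.single (0 : Fin 1 →₀ ℕ) x)
        = sOneHom DM (Xv 0 + Xv 1) 0 (rho x w) := by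
      show opL DM rho (Xv 0 + Xv 1) 0
          (renameV (fun _ : Fin 1 => (0 : Fin 2)) (Finsupp.single 0 x)) w = _
      rw [renameV_single, Finsupp.mapDomain_zero, opL_single DM rho _ _ _ h0,
        monMul_id']
    have e1' : Kh' (Finsupp.single α x) =
        monMul (Finsupp.single (1 : Fin 2) (α 0))
          (sOneHom DM (Xv 0 + Xv 1) 0 (rho x w)) := by
      show opL DM rho (Xv 0 + Xv 1) 0
          (renameV (fun _ : Fin 1 => (1 : Fin 2)) (Finsupp.single α x)) w = _
      rw [renameV_single, opL_single DM rho _ _ _ h0]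
      congr 2
      conv_lhs => rw [fin1_index α]
      rw [Finsupp.mapDomain_single]
    rw [sub1_eq, sOne_single, key (α 0) x, e0, e1']
  have main : ∀ P : MP 1 A, Kh (sub1 D P) = Kh' P := by
    intro P
    induction P using Finsupp.induction with
    | zero => rw [sub1_eq, map_zero, map_zero, map_zero]
    | single_add α x f hαf hx ih =>
      have hsplit : sub1 D (Finsupp.single α x + f)
          = sub1 D (Finsupp.single α x) + sub1 D f := by
        rw [sub1_eq, sub1_eq, sub1_eq, map_add]
      rw [hsplit, map_add, map_add, hsingle α x, ih]
  exact main P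

end Conversions

section MainAux

variable {A M : Type*} [AddCommGroup A] [Module ℂ A] [AddCommGroup M] [Module ℂ M]

lemma cancel1 {G : Type*} [AddCommGroup G] {x1 x2 x3 x4 x5 : G}
    (h : x2 - x4 = x1 - x3 + x5) : x1 - x2 - x3 + x4 + x5 = 0 := by
  calc x1 - x2 - x3 + x4 + x5 = (x1 - x3 + x5) - (x2 - x4) := by abel
    _ = (x2 - x4) - (x2 - x4) := by rw [← h]
    _ = 0 := sub_self _

lemma cancel2 {G : Type*} [AddCommGroup G] {y1 y2 y3 y4 y5 y6 : G}
    (h : y1 - y2 + y3 + y4 - y5 - y6 = 0) : y4 - y6 - y5 + y1 - y2 + y3 = 0 := by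
  calc y4 - y6 - y5 + y1 - y2 + y3 = y1 - y2 + y3 + y4 - y5 - y6 := by abel
    _ = 0 := h

lemma mapT_lie (DM : M →ₗ[ℂ] M) (rho : A → M → MP 1 M) (phi : A → A → MP 1 M)
    (br : A → A → MP 1 A) (T : M →ₗ[ℂ] A)
    (hRB : IsTwistedRB br DM rho phi T) (m n : M) :
    mapCoeff T (lieNS DM (fun u v => rho (T u) v) (fun u v => phi (T u) (T v)) m n)
      = br (T m) (T n) :=
  (hRB m n).symm

lemma ns1_aux (D : A →ₗ[ℂ] A) (br : A → A → MP 1 A)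
    (DM : M →ₗ[ℂ] M) (rho : A → M → MP 1 M) (hM : IsLCAMod D br DM rho)
    (phi : A → A → MP 1 M)
    (T : M →ₗ[ℂ] A) (hT : ∀ m : M, T (DM m) = D (T m))
    (hRB : IsTwistedRB br DM rho phi T) (a b c : M) :
    opL DM (fun u v => rho (T u) v) (Xv 0 + Xv 1) 0
        (renameV (fun _ : Fin 1 => (0 : Fin 2)) (rho (T a) b)) c
      - opR DM (fun u v => rho (T u) v) (Xv 0) 0 a
        (renameV (fun _ : Fin 1 => (1 : Fin 2)) (rho (T b) c))
      - opL DM (fun u v => rho (T u) v) (Xv 0 + Xv 1) 0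
        (renameV (fun _ : Fin 1 => (1 : Fin 2)) (rho (T b) a)) c
      + opR DM (fun u v => rho (T u) v) (Xv 1) 0 b
        (renameV (fun _ : Fin 1 => (0 : Fin 2)) (rho (T a) c))
      + opL DM (fun u v => rho (T u) v) (Xv 0 + Xv 1) 0
        (renameV (fun _ : Fin 1 => (0 : Fin 2)) (phi (T a) (T b))) c = 0 := by
  have hz : ∀ w : M, rho (0 : A) w = 0 := fun w => by
    simpa using hM.smul_left 0 0 w
  rw [opL_o DM rho T _ _ c (hz c), opL_o DM rho T _ _ c (hz c),
    opL_o DM rho T _ _ c (hz c), opR_o, opR_o,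
    ← renameV_mapCoeff, ← renameV_mapCoeff, ← renameV_mapCoeff]
  have hbr : br (T a) (T b) =
      mapCoeff T (rho (T a) b) - sub1 D (mapCoeff T (rho (T b) a))
        + mapCoeff T (phi (T a) (T b)) := by
    rw [hRB a b, ← mapCoeffHom_apply, map_add, map_sub, mapCoeffHom_apply,
      mapCoeffHom_apply, mapCoeffHom_apply, mapT_sub1 T DM D hT]
  have hlin : ∀ p1 p2 p3 : MP 1 A,
      opL DM rho (Xv 0 + Xv 1) 0
          (renameV (fun _ : Fin 1 => (0 : Fin 2)) (p1 - p2 + p3)) c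
        = opL DM rho (Xv 0 + Xv 1) 0 (renameV (fun _ : Fin 1 => (0 : Fin 2)) p1) c
          - opL DM rho (Xv 0 + Xv 1) 0 (renameV (fun _ : Fin 1 => (0 : Fin 2)) p2) c
          + opL DM rho (Xv 0 + Xv 1) 0 (renameV (fun _ : Fin 1 => (0 : Fin 2)) p3) c := by
    intro p1 p2 p3
    let Kh : MP 1 A →+ MP 2 M :=
      (opLHom DM rho (Xv 0 + Xv 1) 0 c (hz c) (fun x y => hM.add_left x y c)).comp
        (renameHom (fun _ : Fin 1 => (0 : Fin 2)))
    show Kh (p1 - p2 + p3) = Kh p1 - Kh p2 + Kh p3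
    rw [map_add, map_sub]
  have hO : opL DM rho (Xv 0 + Xv 1) 0
      (renameV (fun _ : Fin 1 => (0 : Fin 2)) (br (T a) (T b))) c
      = opL DM rho (Xv 0 + Xv 1) 0
          (renameV (fun _ : Fin 1 => (0 : Fin 2)) (mapCoeff T (rho (T a) b))) c
        - opL DM rho (Xv 0 + Xv 1) 0
          (renameV (fun _ : Fin 1 => (1 : Fin 2)) (mapCoeff T (rho (T b) a))) c
        + opL DM rho (Xv 0 + Xv 1) 0
          (renameV (fun _ : Fin 1 => (0 : Fin 2)) (mapCoeff T (phi (T a) (T b)))) c := by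
    rw [hbr, hlin,
      shift_lemma D DM rho c (hz c) (fun x y => hM.add_left x y c)
        (fun x => hM.d_left x c) (mapCoeff T (rho (T b) a))]
  exact cancel1 ((hM.comm (T a) (T b) c).trans hO)

lemma ns2_aux (D : A →ₗ[ℂ] A) (br : A → A → MP 1 A)
    (DM : M →ₗ[ℂ] M) (rho : A → M → MP 1 M) (hM : IsLCAMod D br DM rho)
    (phi : A → A → MP 1 M) (hphi : IsTwoCocycle D br DM rho phi)
    (T : M →ₗ[ℂ] A) (hT : ∀ m : M, T (DM m) = D (T m))
    (hRB : IsTwistedRB br DM rho phi T) (a b c : M) :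
    opR DM (fun u v => phi (T u) (T v)) (Xv 0) 0 a
        (renameV (fun _ : Fin 1 => (1 : Fin 2))
          (lieNS DM (fun u v => rho (T u) v) (fun u v => phi (T u) (T v)) b c))
      - opL DM (fun u v => phi (T u) (T v)) (Xv 0 + Xv 1) 0
        (renameV (fun _ : Fin 1 => (0 : Fin 2))
          (lieNS DM (fun u v => rho (T u) v) (fun u v => phi (T u) (T v)) a b)) c
      - opR DM (fun u v => phi (T u) (T v)) (Xv 1) 0 b
        (renameV (fun _ : Fin 1 => (0 : Fin 2))
          (lieNS DM (fun u v => rho (T u) v) (fun u v => phi (T u) (T v)) a c))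
      + opR DM (fun u v => rho (T u) v) (Xv 0) 0 a
        (renameV (fun _ : Fin 1 => (1 : Fin 2)) (phi (T b) (T c)))
      - opR DM (fun u v => rho (T u) v) (Xv 1) 0 b
        (renameV (fun _ : Fin 1 => (0 : Fin 2)) (phi (T a) (T c)))
      + opR DM (fun u v => rho (T u) v) (-(Xv 0) - Xv 1) (-1) c
        (renameV (fun _ : Fin 1 => (0 : Fin 2)) (phi (T a) (T b))) = 0 := by
  have hphir : ∀ x : A, phi x 0 = 0 := fun x => by
    simpa using hphi.smul_right 0 x 0
  have hphil : ∀ y : A, phi 0 y = 0 := fun y => by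
    simpa using hphi.smul_left 0 0 y
  rw [opR_v DM phi T _ _ a (hphir (T a)), opL_v DM phi T _ _ c (hphil (T c)),
    opR_v DM phi T _ _ b (hphir (T b)), opR_o, opR_o, opR_o,
    ← renameV_mapCoeff, ← renameV_mapCoeff, ← renameV_mapCoeff,
    mapT_lie DM rho phi br T hRB, mapT_lie DM rho phi br T hRB,
    mapT_lie DM rho phi br T hRB]
  exact cancel2 (hphi.cocycle (T a) (T b) (T c))

end MainAux

end Aux17

/-- A `φ`-twisted relative Rota–Baxter operator `T : M → A`
makes `M` an NS-Lie conformal algebra with `u∘_λ v = ρ(T u)_λ v` and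
`u∨_λ v = φ_λ(T u, T v)`. -/
theorem statement17 {A M : Type*} [AddCommGroup A] [Module ℂ A]
    [AddCommGroup M] [Module ℂ M]
    (D : A →ₗ[ℂ] A) (br : A → A → MP 1 A) (hL : IsLCA D br)
    (DM : M →ₗ[ℂ] M) (rho : A → M → MP 1 M) (hM : IsLCAMod D br DM rho)
    (phi : A → A → MP 1 M) (hphi : IsTwoCocycle D br DM rho phi)
    (T : M →ₗ[ℂ] A) (hT : ∀ m : M, T (DM m) = D (T m))
    (hRB : IsTwistedRB br DM rho phi T) :
    IsNSLie DM (fun u v => rho (T u) v) (fun u v => phi (T u) (T v)) := by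
  refine
    { o_add_left := fun a b c => ?_
      o_smul_left := fun r a b => ?_
      o_add_right := fun a b c => ?_
      o_smul_right := fun r a b => ?_
      o_sesq_left := fun a b => ?_
      o_sesq_right := fun a b => ?_
      v_add_left := fun a b c => ?_
      v_smul_left := fun r a b => ?_
      v_add_right := fun a b c => ?_
      v_smul_right := fun r a b => ?_
      v_sesq_left := fun a b => ?_
      v_sesq_right := fun a b => ?_
      v_skew := fun a b => ?_
      ns1 := fun a b c => ns1_aux D br DM rho hM phi T hT hRB a b c
      ns2 := fun a b c => ns2_aux D br DM rho hM phi hphi T hT hRB a b c }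
  · show rho (T (a + b)) c = rho (T a) c + rho (T b) c
    rw [map_add]; exact hM.add_left _ _ _
  · show rho (T (r • a)) b = r • rho (T a) b
    rw [map_smul]; exact hM.smul_left _ _ _
  · show rho (T a) (b + c) = rho (T a) b + rho (T a) c
    exact hM.add_right _ _ _
  · show rho (T a) (r • b) = r • rho (T a) b
    exact hM.smul_right _ _ _
  · show rho (T (DM a)) b = -(monMul lam1 (rho (T a) b))
    rw [hT]; exact hM.d_left _ _
  · show rho (T a) (DM b) = monMul lam1 (rho (T a) b) + mapCoeff DM (rho (T a) b)
    exact hM.d_right _ _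
  · show phi (T (a + b)) (T c) = phi (T a) (T c) + phi (T b) (T c)
    rw [map_add]; exact hphi.add_left _ _ _
  · show phi (T (r • a)) (T b) = r • phi (T a) (T b)
    rw [map_smul]; exact hphi.smul_left _ _ _
  · show phi (T a) (T (b + c)) = phi (T a) (T b) + phi (T a) (T c)
    rw [map_add]; exact hphi.add_right _ _ _
  · show phi (T a) (T (r • b)) = r • phi (T a) (T b)
    rw [map_smul]; exact hphi.smul_right _ _ _
  · show phi (T (DM a)) (T b) = -(monMul lam1 (phi (T a) (T b)))
    rw [hT]; exact hphi.sesq_left _ _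
  · show phi (T a) (T (DM b)) =
      monMul lam1 (phi (T a) (T b)) + mapCoeff DM (phi (T a) (T b))
    rw [hT]; exact hphi.sesq_right _ _
  · show phi (T a) (T b) = -(sub1 DM (phi (T b) (T a)))
    exact hphi.skew _ _

end LCAF
end
end

section
/- Let (A,[·_λ·]) be a Lie conformal algebra and N a Nijenhuis operator on A. Then for all natural numbers k, l: (i) (A, [·_λ·]_{N^k}) is a Lie conformal algebra; (ii) N^l is a Nijenhuis operator on (A, [·_λ·]_{N^k}); (iii) the Lie conformal algebras (A, ([·_λ·]_{N^k})_{N^l}) and (A, [·_λ·]_{N^{k+l}}) coincide; (iv) the brackets [·_λ·]_{N^k} and [·_λ·]_{N^l} are compatible, i.e. every linear combination of them is again a Lie conformal algebra bracket on A; (v) N^l is a homomorphism of Lie conformal algebras from (A, [·_λ·]_{N^{k+l}}) to (A, [·_λ·]_{N^k}). -/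
/- ------------------------------------------------------------------
Common definitions: λ-polynomials with coefficients in a ℂ[∂]-module,
Lie conformal algebras, modules, cochain complexes, the
Nijenhuis–Richardson bracket, bidegrees, lifts and twistings.
------------------------------------------------------------------- -/

open scoped Classical

noncomputable section

namespace LCAF

/-! ### Auxiliary lemmas for Statement 19 -/

section Aux19Poly

variable {A : Type*} [AddCommGroup A] [Module ℂ A]

theorem aux_mapCoeff_apply {k : ℕ} (P : A →ₗ[ℂ] A) (p : MP k A) (β : Fin k →₀ ℕ) :
    mapCoeff P p β = P (p β) := Finsupp.mapRange_apply

theorem aux_mapCoeff_add {k : ℕ} (P : A →ₗ[ℂ] A) (p q : MP k A) :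
    mapCoeff P (p + q) = mapCoeff P p + mapCoeff P q := by
  ext β; simp [aux_mapCoeff_apply]

theorem aux_mapCoeff_neg {k : ℕ} (P : A →ₗ[ℂ] A) (p : MP k A) :
    mapCoeff P (-p) = -mapCoeff P p := by
  ext β; simp [aux_mapCoeff_apply]

theorem aux_mapCoeff_sub {k : ℕ} (P : A →ₗ[ℂ] A) (p q : MP k A) :
    mapCoeff P (p - q) = mapCoeff P p - mapCoeff P q := by
  ext β; simp [aux_mapCoeff_apply]

theorem aux_mapCoeff_smul {k : ℕ} (P : A →ₗ[ℂ] A) (r : ℂ) (p : MP k A) :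
    mapCoeff P (r • p) = r • mapCoeff P p := by
  ext β; simp [aux_mapCoeff_apply]

theorem aux_mapCoeff_zero {k : ℕ} (P : A →ₗ[ℂ] A) :
    mapCoeff P (0 : MP k A) = 0 := by
  ext β; simp [aux_mapCoeff_apply]

theorem aux_mapCoeff_one {k : ℕ} (p : MP k A) :
    mapCoeff (1 : Module.End ℂ A) p = p := by
  ext β; simp [aux_mapCoeff_apply]

theorem aux_mapCoeff_mul {k : ℕ} (P Q : Module.End ℂ A) (p : MP k A) :
    mapCoeff (P * Q) p = mapCoeff P (mapCoeff Q p) := by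
  ext β; simp [aux_mapCoeff_apply]

theorem aux_mapCoeff_addE {k : ℕ} (P Q : Module.End ℂ A) (p : MP k A) :
    mapCoeff (P + Q) p = mapCoeff P p + mapCoeff Q p := by
  ext β; simp [aux_mapCoeff_apply]

theorem aux_mapCoeff_smulE {k : ℕ} (r : ℂ) (P : Module.End ℂ A) (p : MP k A) :
    mapCoeff (r • P) p = r • mapCoeff P p := by
  ext β; simp [aux_mapCoeff_apply]

theorem aux_mapCoeff_comm {k : ℕ} (P Q : A →ₗ[ℂ] A)
    (h : ∀ x, P (Q x) = Q (P x)) (p : MP k A) :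
    mapCoeff P (mapCoeff Q p) = mapCoeff Q (mapCoeff P p) := by
  ext β; simp [aux_mapCoeff_apply, h]

theorem aux_mapCoeff_sum {k : ℕ} {ι : Type*} (P : A →ₗ[ℂ] A) (s : Finset ι)
    (f : ι → MP k A) :
    mapCoeff P (∑ i ∈ s, f i) = ∑ i ∈ s, mapCoeff P (f i) := by
  ext β; simp [aux_mapCoeff_apply, Finsupp.finset_sum_apply]

theorem aux_monMul_add {k : ℕ} (α : Fin k →₀ ℕ) (p q : MP k A) :
    monMul α (p + q) = monMul α p + monMul α q := Finsupp.mapDomain_add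

theorem aux_monMul_zero {k : ℕ} (α : Fin k →₀ ℕ) :
    monMul α (0 : MP k A) = 0 := Finsupp.mapDomain_zero

theorem aux_monMul_neg {k : ℕ} (α : Fin k →₀ ℕ) (p : MP k A) :
    monMul α (-p) = -monMul α p := by
  have h := aux_monMul_add α (-p) p
  rw [neg_add_cancel, aux_monMul_zero] at h
  exact eq_neg_of_add_eq_zero_left h.symm

theorem aux_monMul_sub {k : ℕ} (α : Fin k →₀ ℕ) (p q : MP k A) :
    monMul α (p - q) = monMul α p - monMul α q := by
  rw [sub_eq_add_neg, aux_monMul_add, aux_monMul_neg, sub_eq_add_neg]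

theorem aux_monMul_mapCoeff {k : ℕ} (P : A →ₗ[ℂ] A) (α : Fin k →₀ ℕ) (p : MP k A) :
    monMul α (mapCoeff P p) = mapCoeff P (monMul α p) :=
  Finsupp.mapDomain_mapRange _ _ _ _ (map_add P)

theorem aux_scaleP_add {k : ℕ} (q : MP k ℂ) (p p' : MP k A) :
    scaleP q (p + p') = scaleP q p + scaleP q p' := by
  unfold scaleP
  rw [Finsupp.sum, Finsupp.sum, Finsupp.sum, ← Finset.sum_add_distrib]
  exact Finset.sum_congr rfl fun α _ => by rw [aux_monMul_add, smul_add]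

theorem aux_scaleP_zero {k : ℕ} (q : MP k ℂ) : scaleP q (0 : MP k A) = 0 := by
  unfold scaleP
  simp [aux_monMul_zero]

theorem aux_scaleP_mapCoeff {k : ℕ} (P : A →ₗ[ℂ] A) (q : MP k ℂ) (p : MP k A) :
    scaleP q (mapCoeff P p) = mapCoeff P (scaleP q p) := by
  unfold scaleP
  rw [Finsupp.sum, Finsupp.sum, aux_mapCoeff_sum]
  exact Finset.sum_congr rfl fun α _ => by
    rw [aux_monMul_mapCoeff, aux_mapCoeff_smul]

theorem aux_opnd_add {k : ℕ} (D : A →ₗ[ℂ] A) (q : MP k ℂ) (c : ℂ) (p p' : MP k A) :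
    opnd D q c (p + p') = opnd D q c p + opnd D q c p' := by
  unfold opnd
  rw [aux_scaleP_add, aux_mapCoeff_add, smul_add]
  abel

theorem aux_opnd_mapCoeff {k : ℕ} (D : A →ₗ[ℂ] A) (P : A →ₗ[ℂ] A)
    (hPD : ∀ x, P (D x) = D (P x)) (q : MP k ℂ) (c : ℂ) (p : MP k A) :
    opnd D q c (mapCoeff P p) = mapCoeff P (opnd D q c p) := by
  unfold opnd
  rw [aux_scaleP_mapCoeff, aux_mapCoeff_add, aux_mapCoeff_smul,
    aux_mapCoeff_comm D P fun x => (hPD x).symm]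

/-- Auxiliary predicate: `f` is additive and commutes with `mapCoeff P`. -/
def AuxGood {k : ℕ} (P : A →ₗ[ℂ] A) (f : MP k A → MP k A) : Prop :=
  (∀ p q, f (p + q) = f p + f q) ∧ (∀ p, f (mapCoeff P p) = mapCoeff P (f p))

theorem auxGood_id {k : ℕ} (P : A →ₗ[ℂ] A) : AuxGood (k := k) (A := A) P id :=
  ⟨fun _ _ => rfl, fun _ => rfl⟩

theorem auxGood_comp {k : ℕ} (P : A →ₗ[ℂ] A) {f g : MP k A → MP k A}
    (hf : AuxGood P f) (hg : AuxGood P g) : AuxGood P (f ∘ g) :=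
  ⟨fun p q => by simp [Function.comp, hg.1, hf.1],
   fun p => by simp [Function.comp, hg.2, hf.2]⟩

theorem auxGood_iterate {k : ℕ} (P : A →ₗ[ℂ] A) {f : MP k A → MP k A}
    (hf : AuxGood P f) (n : ℕ) : AuxGood P f^[n] := by
  induction n with
  | zero => simpa using auxGood_id (k := k) P
  | succ n ih =>
    rw [Function.iterate_succ]
    exact auxGood_comp P ih hf

theorem auxGood_foldr {k : ℕ} (P : A →ₗ[ℂ] A) (L : List (MP k A → MP k A))
    (h : ∀ f ∈ L, AuxGood P f) : AuxGood P (L.foldr (· ∘ ·) id) := by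
  induction L with
  | nil => exact auxGood_id P
  | cons f L ih =>
    rw [List.foldr_cons]
    exact auxGood_comp P (h f (by simp)) (ih fun g hg => h g (by simp [hg]))

theorem auxGood_zero {k : ℕ} {P : A →ₗ[ℂ] A} {f : MP k A → MP k A}
    (hf : AuxGood P f) : f 0 = 0 := by
  have h := hf.1 0 0
  rw [add_zero] at h
  exact left_eq_add.mp h

theorem aux_OP_good {k k' : ℕ} (D : A →ₗ[ℂ] A) (P : A →ₗ[ℂ] A)
    (hPD : ∀ x, P (D x) = D (P x)) (qf : Fin k → MP k' ℂ) (cf : Fin k → ℂ)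
    (α : Fin k →₀ ℕ) :
    AuxGood P ((List.ofFn fun i : Fin k => (opnd D (qf i) (cf i))^[α i]).foldr
      (· ∘ ·) id) := by
  apply auxGood_foldr
  intro f hf
  rw [List.mem_ofFn] at hf
  obtain ⟨i, rfl⟩ := hf
  exact auxGood_iterate P ⟨aux_opnd_add D (qf i) (cf i),
    aux_opnd_mapCoeff D P hPD (qf i) (cf i)⟩ _

theorem aux_substFun_add {k k' : ℕ} (D : A →ₗ[ℂ] A) (qf : Fin k → MP k' ℂ)
    (cf : Fin k → ℂ) (p p' : MP k A) :
    substFun D qf cf (p + p') = substFun D qf cf p + substFun D qf cf p' := by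
  unfold substFun
  apply Finsupp.sum_add_index'
  · intro α
    rw [Finsupp.single_zero, auxGood_zero (aux_OP_good D 1 (fun _ => rfl) qf cf α)]
  · intro α m n
    rw [Finsupp.single_add, (aux_OP_good D 1 (fun _ => rfl) qf cf α).1]

theorem aux_substFun_zero {k k' : ℕ} (D : A →ₗ[ℂ] A) (qf : Fin k → MP k' ℂ)
    (cf : Fin k → ℂ) : substFun D qf cf (0 : MP k A) = 0 :=
  Finsupp.sum_zero_index

theorem aux_substFun_neg {k k' : ℕ} (D : A →ₗ[ℂ] A) (qf : Fin k → MP k' ℂ)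
    (cf : Fin k → ℂ) (p : MP k A) :
    substFun D qf cf (-p) = -substFun D qf cf p := by
  have h := aux_substFun_add D qf cf (-p) p
  rw [neg_add_cancel, aux_substFun_zero] at h
  exact eq_neg_of_add_eq_zero_left h.symm

theorem aux_substFun_sub {k k' : ℕ} (D : A →ₗ[ℂ] A) (qf : Fin k → MP k' ℂ)
    (cf : Fin k → ℂ) (p p' : MP k A) :
    substFun D qf cf (p - p') = substFun D qf cf p - substFun D qf cf p' := by
  rw [sub_eq_add_neg, aux_substFun_add, aux_substFun_neg, sub_eq_add_neg]

theorem aux_substFun_mapCoeff {k k' : ℕ} (D : A →ₗ[ℂ] A) (P : A →ₗ[ℂ] A)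
    (hPD : ∀ x, P (D x) = D (P x)) (qf : Fin k → MP k' ℂ) (cf : Fin k → ℂ)
    (p : MP k A) :
    substFun D qf cf (mapCoeff P p) = mapCoeff P (substFun D qf cf p) := by
  unfold substFun
  conv_lhs => rw [show mapCoeff P p = Finsupp.mapRange (⇑P) (map_zero P) p from rfl]
  rw [Finsupp.sum_mapRange_index fun α => by
    rw [Finsupp.single_zero, auxGood_zero (aux_OP_good D 1 (fun _ => rfl) qf cf α)]]
  rw [Finsupp.sum, Finsupp.sum, aux_mapCoeff_sum]
  refine Finset.sum_congr rfl fun α _ => ?_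
  rw [show Finsupp.single (0 : Fin k' →₀ ℕ) (P (p α)) =
      mapCoeff P (Finsupp.single 0 (p α)) from Finsupp.mapRange_single.symm,
    (aux_OP_good D P hPD qf cf α).2]

theorem aux_renameV_add {k k' : ℕ} (h : Fin k → Fin k') (p q : MP k A) :
    renameV h (p + q) = renameV h p + renameV h q := Finsupp.mapDomain_add

theorem aux_renameV_zero {k k' : ℕ} (h : Fin k → Fin k') :
    renameV h (0 : MP k A) = 0 := Finsupp.mapDomain_zero

theorem aux_renameV_neg {k k' : ℕ} (h : Fin k → Fin k') (p : MP k A) :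
    renameV h (-p) = -renameV h p := by
  have hh := aux_renameV_add h (-p) p
  rw [neg_add_cancel, aux_renameV_zero] at hh
  exact eq_neg_of_add_eq_zero_left hh.symm

theorem aux_renameV_sub {k k' : ℕ} (h : Fin k → Fin k') (p q : MP k A) :
    renameV h (p - q) = renameV h p - renameV h q := by
  rw [sub_eq_add_neg, aux_renameV_add, aux_renameV_neg, sub_eq_add_neg]

theorem aux_renameV_mapCoeff {k k' : ℕ} (P : A →ₗ[ℂ] A) (h : Fin k → Fin k')
    (p : MP k A) : renameV h (mapCoeff P p) = mapCoeff P (renameV h p) :=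
  Finsupp.mapDomain_mapRange _ _ _ _ (map_add P)

theorem aux_sub1_add (D : A →ₗ[ℂ] A) (p q : MP 1 A) :
    sub1 D (p + q) = sub1 D p + sub1 D q := aux_substFun_add _ _ _ _ _

theorem aux_sub1_neg (D : A →ₗ[ℂ] A) (p : MP 1 A) :
    sub1 D (-p) = -sub1 D p := aux_substFun_neg _ _ _ _

theorem aux_sub1_sub (D : A →ₗ[ℂ] A) (p q : MP 1 A) :
    sub1 D (p - q) = sub1 D p - sub1 D q := aux_substFun_sub _ _ _ _ _

theorem aux_sub1_mapCoeff (D : A →ₗ[ℂ] A) (P : A →ₗ[ℂ] A)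
    (hPD : ∀ x, P (D x) = D (P x)) (p : MP 1 A) :
    sub1 D (mapCoeff P p) = mapCoeff P (sub1 D p) :=
  aux_substFun_mapCoeff _ _ hPD _ _ _

end Aux19Poly

section Aux19Op

set_option linter.unusedSectionVars false

variable {A : Type*} [AddCommGroup A] [Module ℂ A]
variable (D : A →ₗ[ℂ] A) (F : A → A → MP 1 A) (q : MP 2 ℂ) (c : ℂ)

theorem aux_sum3 {p : MP 2 A} (f g h : (Fin 2 →₀ ℕ) → A → MP 2 A) :
    (p.sum fun β x => f β x + g β x - h β x) = p.sum f + p.sum g - p.sum h := by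
  rw [Finsupp.sum, Finsupp.sum, Finsupp.sum, Finsupp.sum, Finset.sum_sub_distrib,
    Finset.sum_add_distrib]

theorem aux_sum_mapCoeff (P : A →ₗ[ℂ] A) (p : MP 2 A)
    (h : (Fin 2 →₀ ℕ) → A → MP 2 A) (h0 : ∀ β, h β 0 = 0) :
    (mapCoeff P p).sum h = p.sum fun β x => h β (P x) := by
  conv_lhs => rw [show mapCoeff P p = Finsupp.mapRange (⇑P) (map_zero P) p from rfl]
  exact Finsupp.sum_mapRange_index h0

theorem aux_mapCoeff_finsuppSum (P : A →ₗ[ℂ] A) (p : MP 2 A)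
    (h : (Fin 2 →₀ ℕ) → A → MP 2 A) :
    mapCoeff P (p.sum h) = p.sum fun β x => mapCoeff P (h β x) := by
  rw [Finsupp.sum, Finsupp.sum, aux_mapCoeff_sum]

theorem aux_opE_zero_right (a : A) (h0 : F a 0 = 0) : opE D F q c a 0 = 0 := by
  unfold opE; rw [h0, aux_substFun_zero]

theorem aux_opE_zero_left (b : A) (h0 : F 0 b = 0) : opE D F q c 0 b = 0 := by
  unfold opE; rw [h0, aux_substFun_zero]

theorem aux_opR_zero (a : A) : opR D F q c a 0 = 0 := Finsupp.sum_zero_index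

theorem aux_opL_zero (b : A) : opL D F q c 0 b = 0 := Finsupp.sum_zero_index

theorem aux_opR_add (a : A) (hadd : ∀ x y, F a (x + y) = F a x + F a y)
    (h0 : F a 0 = 0) (p p' : MP 2 A) :
    opR D F q c a (p + p') = opR D F q c a p + opR D F q c a p' := by
  unfold opR
  apply Finsupp.sum_add_index'
  · intro β; rw [aux_opE_zero_right D F q c a h0, aux_monMul_zero]
  · intro β x y
    unfold opE
    rw [hadd, aux_substFun_add, aux_monMul_add]

theorem aux_opR_neg (a : A) (hadd : ∀ x y, F a (x + y) = F a x + F a y)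
    (h0 : F a 0 = 0) (p : MP 2 A) :
    opR D F q c a (-p) = -opR D F q c a p := by
  have h := aux_opR_add D F q c a hadd h0 (-p) p
  rw [neg_add_cancel, aux_opR_zero] at h
  exact eq_neg_of_add_eq_zero_left h.symm

theorem aux_opR_sub (a : A) (hadd : ∀ x y, F a (x + y) = F a x + F a y)
    (h0 : F a 0 = 0) (p p' : MP 2 A) :
    opR D F q c a (p - p') = opR D F q c a p - opR D F q c a p' := by
  rw [sub_eq_add_neg, aux_opR_add D F q c a hadd h0,
    aux_opR_neg D F q c a hadd h0, sub_eq_add_neg]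

theorem aux_opL_add (b : A) (hadd : ∀ x y, F (x + y) b = F x b + F y b)
    (h0 : F 0 b = 0) (p p' : MP 2 A) :
    opL D F q c (p + p') b = opL D F q c p b + opL D F q c p' b := by
  unfold opL
  apply Finsupp.sum_add_index'
  · intro β; rw [aux_opE_zero_left D F q c b h0, aux_monMul_zero]
  · intro β x y
    unfold opE
    rw [hadd, aux_substFun_add, aux_monMul_add]

theorem aux_opL_neg (b : A) (hadd : ∀ x y, F (x + y) b = F x b + F y b)
    (h0 : F 0 b = 0) (p : MP 2 A) :
    opL D F q c (-p) b = -opL D F q c p b := by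
  have h := aux_opL_add D F q c b hadd h0 (-p) p
  rw [neg_add_cancel, aux_opL_zero] at h
  exact eq_neg_of_add_eq_zero_left h.symm

theorem aux_opL_sub (b : A) (hadd : ∀ x y, F (x + y) b = F x b + F y b)
    (h0 : F 0 b = 0) (p p' : MP 2 A) :
    opL D F q c (p - p') b = opL D F q c p b - opL D F q c p' b := by
  rw [sub_eq_add_neg, aux_opL_add D F q c b hadd h0,
    aux_opL_neg D F q c b hadd h0, sub_eq_add_neg]

theorem aux_mapCoeff_opR (P : A →ₗ[ℂ] A) (a : A) (p : MP 2 A) :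
    mapCoeff P (opR D F q c a p) =
      p.sum fun β x => monMul β (mapCoeff P (opE D F q c a x)) := by
  unfold opR
  rw [Finsupp.sum, Finsupp.sum, aux_mapCoeff_sum]
  exact Finset.sum_congr rfl fun β _ => (aux_monMul_mapCoeff P β _).symm

theorem aux_mapCoeff_opL (P : A →ₗ[ℂ] A) (b : A) (p : MP 2 A) :
    mapCoeff P (opL D F q c p b) =
      p.sum fun β x => monMul β (mapCoeff P (opE D F q c x b)) := by
  unfold opL
  rw [Finsupp.sum, Finsupp.sum, aux_mapCoeff_sum]
  exact Finset.sum_congr rfl fun β _ => (aux_monMul_mapCoeff P β _).symm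

theorem aux_opR_mapCoeff_arg (P : A →ₗ[ℂ] A) (a : A) (h0 : F a 0 = 0)
    (p : MP 2 A) :
    opR D F q c a (mapCoeff P p) =
      p.sum fun β x => monMul β (opE D F q c a (P x)) := by
  unfold opR
  exact aux_sum_mapCoeff P p _ fun β => by
    rw [aux_opE_zero_right D F q c a h0, aux_monMul_zero]

theorem aux_opL_mapCoeff_arg (P : A →ₗ[ℂ] A) (b : A) (h0 : F 0 b = 0)
    (p : MP 2 A) :
    opL D F q c (mapCoeff P p) b =
      p.sum fun β x => monMul β (opE D F q c (P x) b) := by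
  unfold opL
  exact aux_sum_mapCoeff P p _ fun β => by
    rw [aux_opE_zero_left D F q c b h0, aux_monMul_zero]

end Aux19Op

section Aux19Deform

set_option linter.unusedSectionVars false

variable {A : Type*} [AddCommGroup A] [Module ℂ A]
variable (D : A →ₗ[ℂ] A) (br : A → A → MP 1 A) (P : Module.End ℂ A)

theorem aux_br_zero_right (hL : IsLCA D br) (a : A) : br a 0 = 0 := by
  have h := hL.smul_right 0 a 0
  simpa using h

theorem aux_br_zero_left (hL : IsLCA D br) (b : A) : br 0 b = 0 := by
  have h := hL.smul_left 0 0 b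
  simpa using h

theorem aux_deform_add_right (hL : IsLCA D br) (u x y : A) :
    deformBr br P u (x + y) = deformBr br P u x + deformBr br P u y := by
  unfold deformBr
  rw [map_add, hL.add_right, hL.add_right, hL.add_right, aux_mapCoeff_add]
  abel

theorem aux_deform_zero_right (hL : IsLCA D br) (u : A) :
    deformBr br P u 0 = 0 := by
  unfold deformBr
  rw [map_zero, aux_br_zero_right D br hL, aux_br_zero_right D br hL,
    aux_mapCoeff_zero]
  abel

theorem aux_deform_add_left (hL : IsLCA D br) (x y u : A) :
    deformBr br P (x + y) u = deformBr br P x u + deformBr br P y u := by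
  unfold deformBr
  rw [map_add, hL.add_left, hL.add_left, hL.add_left, aux_mapCoeff_add]
  abel

theorem aux_deform_zero_left (hL : IsLCA D br) (u : A) :
    deformBr br P 0 u = 0 := by
  unfold deformBr
  rw [map_zero, aux_br_zero_left D br hL, aux_br_zero_left D br hL,
    aux_mapCoeff_zero]
  abel

theorem aux_opE_deform (hPD : ∀ x, P (D x) = D (P x)) (q : MP 2 ℂ) (c : ℂ)
    (a b : A) :
    opE D (deformBr br P) q c a b =
      opE D br q c (P a) b + opE D br q c a (P b)
        - mapCoeff P (opE D br q c a b) := by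
  unfold opE deformBr
  rw [aux_substFun_sub, aux_substFun_add, aux_substFun_mapCoeff D P hPD]

theorem aux_opE_nij (hPD : ∀ x, P (D x) = D (P x))
    (hNij : ∀ a b : A, br (P a) (P b) =
      mapCoeff P (br (P a) b + br a (P b) - mapCoeff P (br a b)))
    (q : MP 2 ℂ) (c : ℂ) (a b : A) :
    opE D br q c (P a) (P b) =
      mapCoeff P (opE D br q c (P a) b + opE D br q c a (P b)
        - mapCoeff P (opE D br q c a b)) := by
  unfold opE
  rw [hNij, aux_substFun_mapCoeff D P hPD, aux_substFun_sub, aux_substFun_add,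
    aux_substFun_mapCoeff D P hPD]

theorem aux_opR_deform (hL : IsLCA D br) (hPD : ∀ x, P (D x) = D (P x))
    (q : MP 2 ℂ) (c : ℂ) (a : A) (p : MP 2 A) :
    opR D (deformBr br P) q c a p =
      opR D br q c (P a) p + opR D br q c a (mapCoeff P p)
        - mapCoeff P (opR D br q c a p) := by
  rw [aux_opR_mapCoeff_arg D br q c P a (aux_br_zero_right D br hL a) p,
    aux_mapCoeff_opR D br q c P a p]
  unfold opR
  rw [← aux_sum3]
  exact Finsupp.sum_congr fun β _ => by
    rw [aux_opE_deform D br P hPD q c a _, aux_monMul_sub, aux_monMul_add]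

theorem aux_opL_deform (hL : IsLCA D br) (hPD : ∀ x, P (D x) = D (P x))
    (q : MP 2 ℂ) (c : ℂ) (b : A) (p : MP 2 A) :
    opL D (deformBr br P) q c p b =
      opL D br q c (mapCoeff P p) b + opL D br q c p (P b)
        - mapCoeff P (opL D br q c p b) := by
  rw [aux_opL_mapCoeff_arg D br q c P b (aux_br_zero_left D br hL b) p,
    aux_mapCoeff_opL D br q c P b p]
  unfold opL
  rw [← aux_sum3]
  exact Finsupp.sum_congr fun β _ => by
    rw [aux_opE_deform D br P hPD q c _ b, aux_monMul_sub, aux_monMul_add]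

theorem aux_opR_nij (hL : IsLCA D br) (hPD : ∀ x, P (D x) = D (P x))
    (hNij : ∀ a b : A, br (P a) (P b) =
      mapCoeff P (br (P a) b + br a (P b) - mapCoeff P (br a b)))
    (q : MP 2 ℂ) (c : ℂ) (a : A) (p : MP 2 A) :
    opR D br q c (P a) (mapCoeff P p) =
      mapCoeff P (opR D br q c (P a) p + opR D br q c a (mapCoeff P p)
        - mapCoeff P (opR D br q c a p)) := by
  rw [aux_mapCoeff_sub, aux_mapCoeff_add,
    aux_mapCoeff_opR D br q c P (P a) p,
    aux_mapCoeff_opR D br q c P a (mapCoeff P p),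
    aux_sum_mapCoeff P p _ (fun β => by
      rw [aux_opE_zero_right D br q c a (aux_br_zero_right D br hL a),
        aux_mapCoeff_zero, aux_monMul_zero]),
    aux_mapCoeff_opR D br q c P a p,
    aux_mapCoeff_finsuppSum,
    aux_opR_mapCoeff_arg D br q c P (P a) (aux_br_zero_right D br hL (P a)) p]
  rw [← aux_sum3]
  exact Finsupp.sum_congr fun β _ => by
    rw [aux_opE_nij D br P hPD hNij q c a _]
    simp only [aux_mapCoeff_add, aux_mapCoeff_sub, aux_monMul_add, aux_monMul_sub,
      aux_monMul_mapCoeff]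

theorem aux_opL_nij (hL : IsLCA D br) (hPD : ∀ x, P (D x) = D (P x))
    (hNij : ∀ a b : A, br (P a) (P b) =
      mapCoeff P (br (P a) b + br a (P b) - mapCoeff P (br a b)))
    (q : MP 2 ℂ) (c : ℂ) (b : A) (p : MP 2 A) :
    opL D br q c (mapCoeff P p) (P b) =
      mapCoeff P (opL D br q c (mapCoeff P p) b + opL D br q c p (P b)
        - mapCoeff P (opL D br q c p b)) := by
  rw [aux_mapCoeff_sub, aux_mapCoeff_add,
    aux_mapCoeff_opL D br q c P (P b) p,
    aux_mapCoeff_opL D br q c P b (mapCoeff P p),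
    aux_sum_mapCoeff P p _ (fun β => by
      rw [aux_opE_zero_left D br q c b (aux_br_zero_left D br hL b),
        aux_mapCoeff_zero, aux_monMul_zero]),
    aux_mapCoeff_opL D br q c P b p,
    aux_mapCoeff_finsuppSum,
    aux_opL_mapCoeff_arg D br q c P (P b) (aux_br_zero_left D br hL (P b)) p]
  rw [← aux_sum3]
  exact Finsupp.sum_congr fun β _ => by
    rw [aux_opE_nij D br P hPD hNij q c _ b]
    simp only [aux_mapCoeff_add, aux_mapCoeff_sub, aux_monMul_add, aux_monMul_sub,
      aux_monMul_mapCoeff]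

theorem aux_deform_isLCA (hL : IsLCA D br)
    (hPD : ∀ x, P (D x) = D (P x))
    (hNij : ∀ a b : A, br (P a) (P b) =
      mapCoeff P (br (P a) b + br a (P b) - mapCoeff P (br a b))) :
    IsLCA D (deformBr br P) := by
  have hz_r := aux_br_zero_right D br hL
  have hz_l := aux_br_zero_left D br hL
  refine ⟨aux_deform_add_left D br P hL, ?_, aux_deform_add_right D br P hL,
    ?_, ?_, ?_, ?_, ?_⟩
  · -- smul_left
    intro r a b
    unfold deformBr
    simp only [map_smul, hL.smul_left, hL.smul_right, aux_mapCoeff_smul]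
    module
  · -- smul_right
    intro r a b
    unfold deformBr
    simp only [map_smul, hL.smul_left, hL.smul_right, aux_mapCoeff_smul]
    module
  · -- sesq_left
    intro a b
    unfold deformBr
    rw [hPD a]
    simp only [hL.sesq_left, aux_mapCoeff_neg, aux_monMul_add, aux_monMul_sub,
      aux_monMul_mapCoeff]
    abel
  · -- sesq_right
    intro a b
    unfold deformBr
    rw [hPD b]
    simp only [hL.sesq_right, aux_mapCoeff_add, aux_mapCoeff_sub,
      aux_monMul_add, aux_monMul_sub, aux_monMul_mapCoeff,
      aux_mapCoeff_comm P D hPD]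
    abel
  · -- skew
    intro a b
    unfold deformBr
    rw [hL.skew (P a) b, hL.skew a (P b), hL.skew a b]
    simp only [aux_sub1_add, aux_sub1_sub, aux_sub1_mapCoeff D P hPD,
      aux_mapCoeff_neg]
    abel
  · -- jacobi
    intro a b c
    have muP : ∀ x y : A, mapCoeff P (deformBr br P x y) = br (P x) (P y) :=
      fun x y => by unfold deformBr; exact (hNij x y).symm
    have hren : ∀ (r : Fin 1 → Fin 2) (x y : A),
        mapCoeff P (renameV r (deformBr br P x y)) = renameV r (br (P x) (P y)) := by
      intro r x y; rw [← aux_renameV_mapCoeff, muP]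
    rw [aux_opR_deform D br P hL hPD (Xv 0) 0 a,
      aux_opL_deform D br P hL hPD (Xv 0 + Xv 1) 0 c,
      aux_opR_deform D br P hL hPD (Xv 1) 0 b,
      hren (fun _ => 1) b c, hren (fun _ => 0) a b, hren (fun _ => 0) a c]
    simp only [deformBr]
    simp only [aux_renameV_sub, aux_renameV_add, aux_renameV_mapCoeff]
    simp only [aux_opR_sub D br (Xv 0) 0 (P a) (hL.add_right (P a)) (hz_r (P a)),
      aux_opR_add D br (Xv 0) 0 (P a) (hL.add_right (P a)) (hz_r (P a)),
      aux_opR_sub D br (Xv 0) 0 a (hL.add_right a) (hz_r a),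
      aux_opR_add D br (Xv 0) 0 a (hL.add_right a) (hz_r a),
      aux_opR_sub D br (Xv 1) 0 (P b) (hL.add_right (P b)) (hz_r (P b)),
      aux_opR_add D br (Xv 1) 0 (P b) (hL.add_right (P b)) (hz_r (P b)),
      aux_opR_sub D br (Xv 1) 0 b (hL.add_right b) (hz_r b),
      aux_opR_add D br (Xv 1) 0 b (hL.add_right b) (hz_r b),
      aux_opL_sub D br (Xv 0 + Xv 1) 0 (P c)
        (fun x y => hL.add_left x y (P c)) (hz_l (P c)),
      aux_opL_add D br (Xv 0 + Xv 1) 0 (P c)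
        (fun x y => hL.add_left x y (P c)) (hz_l (P c)),
      aux_opL_sub D br (Xv 0 + Xv 1) 0 c (fun x y => hL.add_left x y c) (hz_l c),
      aux_opL_add D br (Xv 0 + Xv 1) 0 c (fun x y => hL.add_left x y c) (hz_l c),
      aux_mapCoeff_add, aux_mapCoeff_sub]
    rw [aux_opR_nij D br P hL hPD hNij (Xv 0) 0 a (renameV (fun _ => 1) (br b c)),
      aux_opR_nij D br P hL hPD hNij (Xv 1) 0 b (renameV (fun _ => 0) (br a c)),
      aux_opL_nij D br P hL hPD hNij (Xv 0 + Xv 1) 0 c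
        (renameV (fun _ => 0) (br a b))]
    simp only [aux_mapCoeff_add, aux_mapCoeff_sub]
    rw [hL.jacobi (P a) (P b) c, hL.jacobi (P a) b (P c), hL.jacobi a (P b) (P c),
      hL.jacobi (P a) b c, hL.jacobi a (P b) c, hL.jacobi a b (P c),
      hL.jacobi a b c]
    simp only [aux_mapCoeff_add, aux_mapCoeff_sub]
    abel

end Aux19Deform

section Aux19Master

set_option linter.unusedSectionVars false

variable {A : Type*} [AddCommGroup A] [Module ℂ A]
variable (D : A →ₗ[ℂ] A) (br : A → A → MP 1 A) (N : Module.End ℂ A)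

theorem aux_pow_apply (m n : ℕ) (x : A) :
    (N ^ m) ((N ^ n) x) = (N ^ (m + n)) x := by
  rw [← Module.End.mul_apply, ← pow_add]

theorem aux_succ_apply (p : ℕ) (x : A) : N ((N ^ p) x) = (N ^ (p + 1)) x := by
  rw [← Module.End.mul_apply, ← pow_succ']

theorem aux_mapCoeff_pow {k : ℕ} (m n : ℕ) (p : MP k A) :
    mapCoeff (N ^ m) (mapCoeff (N ^ n) p) = mapCoeff (N ^ (m + n)) p := by
  rw [← aux_mapCoeff_mul, ← pow_add]

theorem aux_mapCoeff_succ {k : ℕ} (n : ℕ) (p : MP k A) :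
    mapCoeff N (mapCoeff (N ^ n) p) = mapCoeff (N ^ (n + 1)) p := by
  rw [← aux_mapCoeff_mul, ← pow_succ']

theorem aux_powD (hND : ∀ x, N (D x) = D (N x)) (l : ℕ) :
    ∀ x, (N ^ l) (D x) = D ((N ^ l) x) := by
  induction l with
  | zero => intro x; simp
  | succ l ih =>
    intro x
    simp [pow_succ, Module.End.mul_apply, hND, ih]

theorem aux_master
    (hN2 : ∀ a b : A, br (N a) (N b) =
      mapCoeff N (br (N a) b + br a (N b) - mapCoeff N (br a b))) :
    ∀ (p q : ℕ) (a b : A), br ((N ^ p) a) ((N ^ q) b) =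
      mapCoeff (N ^ q) (br ((N ^ p) a) b) + mapCoeff (N ^ p) (br a ((N ^ q) b))
        - mapCoeff (N ^ (p + q)) (br a b) := by
  intro p
  induction p with
  | zero =>
    intro q a b
    simp only [pow_zero, Module.End.one_apply, aux_mapCoeff_one, Nat.zero_add]
    abel
  | succ p ihp =>
    intro q
    induction q with
    | zero =>
      intro a b
      simp only [pow_zero, Module.End.one_apply, aux_mapCoeff_one, Nat.add_zero]
      abel
    | succ q ihq =>
      intro a b
      have hrec := hN2 ((N ^ p) a) ((N ^ q) b)
      rw [aux_succ_apply N p a, aux_succ_apply N q b] at hrec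
      rw [hrec, ihq a b, ihp (q + 1) a b, ihp q a b]
      simp only [aux_mapCoeff_add, aux_mapCoeff_sub, aux_mapCoeff_succ,
        aux_mapCoeff_pow]
      simp only [show p + 1 + q + 1 = p + q + 2 from by omega,
        show p + (q + 1) + 1 = p + q + 2 from by omega,
        show p + q + 1 + 1 = p + q + 2 from by omega,
        show p + 1 + (q + 1) = p + q + 2 from by omega]
      abel

theorem aux_nij_pow
    (hN2 : ∀ a b : A, br (N a) (N b) =
      mapCoeff N (br (N a) b + br a (N b) - mapCoeff N (br a b))) (k : ℕ) :
    ∀ a b : A, br ((N ^ k) a) ((N ^ k) b) =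
      mapCoeff (N ^ k) (br ((N ^ k) a) b + br a ((N ^ k) b)
        - mapCoeff (N ^ k) (br a b)) := by
  intro a b
  rw [aux_mapCoeff_sub, aux_mapCoeff_add, aux_mapCoeff_pow]
  exact aux_master br N hN2 k k a b

end Aux19Master

/-- Properties of powers of a Nijenhuis operator `N` on a Lie
conformal algebra `(A, [·_λ·])`: for all `k, l ∈ ℕ`,
(i) `[·_λ·]_{N^k}` is a Lie conformal algebra bracket;
(ii) `N^l` is a Nijenhuis operator on `(A, [·_λ·]_{N^k})`;
(iii) `([·_λ·]_{N^k})_{N^l} = [·_λ·]_{N^{k+l}}`;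
(iv) `[·_λ·]_{N^k}` and `[·_λ·]_{N^l}` are compatible;
(v) `N^l : (A, [·_λ·]_{N^{k+l}}) → (A, [·_λ·]_{N^k})` is a homomorphism. -/
theorem statement19 {A : Type*} [AddCommGroup A] [Module ℂ A]
    (D : A →ₗ[ℂ] A) (br : A → A → MP 1 A) (hL : IsLCA D br)
    (N : Module.End ℂ A) (hN : IsNijenhuis D br N) (k l : ℕ) :
    IsLCA D (deformBr br (N ^ k)) ∧
    IsNijenhuis D (deformBr br (N ^ k)) (N ^ l) ∧
    (∀ a b : A,
      deformBr (deformBr br (N ^ k)) (N ^ l) a b = deformBr br (N ^ (k + l)) a b) ∧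
    (∀ c₁ c₂ : ℂ,
      IsLCA D (fun a b => c₁ • deformBr br (N ^ k) a b +
        c₂ • deformBr br (N ^ l) a b)) ∧
    (∀ a b : A,
      mapCoeff (N ^ l) (deformBr br (N ^ (k + l)) a b) =
        deformBr br (N ^ k) ((N ^ l) a) ((N ^ l) b)) := by
  have hND := hN.1
  have hN2 := hN.2
  have powD : ∀ m : ℕ, ∀ x, (N ^ m) (D x) = D ((N ^ m) x) := fun m =>
    aux_powD D N hND m
  have master := aux_master br N hN2
  have pp : ∀ (m n : ℕ) (x : A), (N ^ m) ((N ^ n) x) = (N ^ (m + n)) x :=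
    aux_pow_apply N
  -- (iii)
  have h3 : ∀ a b : A,
      deformBr (deformBr br (N ^ k)) (N ^ l) a b = deformBr br (N ^ (k + l)) a b := by
    intro a b
    simp only [deformBr]
    simp only [pp, aux_mapCoeff_add, aux_mapCoeff_sub, aux_mapCoeff_pow]
    rw [master l k a b, master k l a b]
    simp only [show l + k = k + l from Nat.add_comm l k]
    abel
  -- (v)
  have h5 : ∀ a b : A,
      mapCoeff (N ^ l) (deformBr br (N ^ (k + l)) a b) =
        deformBr br (N ^ k) ((N ^ l) a) ((N ^ l) b) := by
    intro a b
    simp only [deformBr]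
    simp only [pp, aux_mapCoeff_add, aux_mapCoeff_sub, aux_mapCoeff_pow]
    rw [master (k + l) l a b, master l (k + l) a b, master l l a b]
    simp only [aux_mapCoeff_add, aux_mapCoeff_sub, aux_mapCoeff_pow]
    simp only [show l + (k + l) = k + l + l from by omega,
      show k + (l + l) = k + l + l from by omega]
    abel
  -- (i)
  have h1 : IsLCA D (deformBr br (N ^ k)) :=
    aux_deform_isLCA D br (N ^ k) hL (powD k) (aux_nij_pow br N hN2 k)
  -- (ii)
  have h2 : IsNijenhuis D (deformBr br (N ^ k)) (N ^ l) := by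
    refine ⟨powD l, fun a b => ?_⟩
    calc deformBr br (N ^ k) ((N ^ l) a) ((N ^ l) b)
        = mapCoeff (N ^ l) (deformBr br (N ^ (k + l)) a b) := (h5 a b).symm
      _ = mapCoeff (N ^ l) (deformBr (deformBr br (N ^ k)) (N ^ l) a b) := by
          rw [h3 a b]
      _ = _ := rfl
  -- (iv)
  have h4 : ∀ c₁ c₂ : ℂ,
      IsLCA D (fun a b => c₁ • deformBr br (N ^ k) a b +
        c₂ • deformBr br (N ^ l) a b) := by
    intro c₁ c₂
    have hfun : (fun a b => c₁ • deformBr br (N ^ k) a b +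
        c₂ • deformBr br (N ^ l) a b) = deformBr br (c₁ • N ^ k + c₂ • N ^ l) := by
      funext a b
      simp only [deformBr, LinearMap.add_apply, LinearMap.smul_apply,
        aux_mapCoeff_addE, aux_mapCoeff_smulE, hL.add_left, hL.smul_left,
        hL.add_right, hL.smul_right, aux_mapCoeff_add, aux_mapCoeff_smul]
      module
    rw [hfun]
    apply aux_deform_isLCA D br _ hL
    · intro x
      simp [LinearMap.add_apply, LinearMap.smul_apply, powD k, powD l]
    · intro a b
      simp only [LinearMap.add_apply, LinearMap.smul_apply, hL.add_left,
        hL.smul_left, hL.add_right, hL.smul_right, aux_mapCoeff_addE,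
        aux_mapCoeff_smulE, aux_mapCoeff_add, aux_mapCoeff_sub, aux_mapCoeff_smul]
      rw [master k k a b, master k l a b, master l k a b, master l l a b]
      simp only [aux_mapCoeff_add, aux_mapCoeff_sub, aux_mapCoeff_smul,
        aux_mapCoeff_pow]
      simp only [show l + k = k + l from Nat.add_comm l k]
      module
  exact ⟨h1, h2, h3, h4, h5⟩

end LCAF
end
end
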